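/- arXiv:math/0306354 — 6 statements merged into one kernel-verified Lean document; each statement's English description precedes it below -/
import Mathlib

section
/- If K has positive Lebesgue measure, then K tiles the real line by integer translations: there exists a set T of integers such that ℝ = ⋃_{t ∈ T} (K + t) and Leb((K + s) ∩ (K + t)) = 0 for all distinct s, t ∈ T. (This is the paper's Tiling Theorem in the case f(z) = z^d: if the attractor of the lifted iterated function system has positive measure, it tiles the preimage of the Julia set under deck transformations.) -/
open MeasureTheory Set Filter Metric Pointwise
open scoped ENNReal NNReal Topology

lemma volAffine (a b : ℝ) (A : Set ℝ) :
    volume ((fun x => a * x + b) '' A) = ENNReal.ofReal |a| * volume A := by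
  have h1 : ((fun x => a * x + b) '' A) = (fun y => y + b) '' (a • A) := by
    rw [← Set.image_smul, Set.image_image]
    rfl
  rw [h1, Set.image_add_right, measure_preimage_add_right, Measure.addHaar_smul]
  simp

lemma volPhi {P : ℝ} (hP : 0 < P) (m : ℝ) (A : Set ℝ) :
    volume ((fun x : ℝ => (x + m) / P) '' A) = ENNReal.ofReal P⁻¹ * volume A := by
  have h : (fun x : ℝ => (x + m) / P) = fun x : ℝ => P⁻¹ * x + m / P := by
    funext x; field_simp
  rw [h, volAffine, abs_of_pos (by positivity)]

lemma volPsi {P : ℝ} (hP : 0 < P) (m : ℝ) (A : Set ℝ) :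
    volume ((fun x : ℝ => P * x - m) '' A) = ENNReal.ofReal P * volume A := by
  have h : (fun x : ℝ => P * x - m) = fun x : ℝ => P * x + (-m) := by
    funext x; ring
  rw [h, volAffine, abs_of_pos hP]

lemma injPhi {P : ℝ} (hP : 0 < P) (m : ℝ) : Function.Injective (fun x : ℝ => (x + m) / P) := by
  intro x y h
  simp only [div_eq_div_iff (ne_of_gt hP) (ne_of_gt hP), div_left_inj' (ne_of_gt hP)] at h
  nlinarith [h]

lemma injPsi {P : ℝ} (hP : 0 < P) (m : ℝ) : Function.Injective (fun x : ℝ => P * x - m) := by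
  intro x y h
  simp only [sub_left_inj] at h
  exact mul_left_cancel₀ (ne_of_gt hP) h

lemma level1 (d : ℕ) (hd : 2 ≤ d) (n : Fin d → ℤ) (K : Set ℝ) (hc : IsCompact K)
    (hK : K = ⋃ i : Fin d, (fun x : ℝ => (x + (n i : ℝ)) / (d : ℝ)) '' K) :
    ∀ i j : Fin d, i ≠ j →
      volume (((fun x : ℝ => (x + (n i : ℝ)) / (d : ℝ)) '' K) ∩
        ((fun x : ℝ => (x + (n j : ℝ)) / (d : ℝ)) '' K)) = 0 := by
  intro i j hij
  set A : Fin d → Set ℝ := fun l => (fun x : ℝ => (x + (n l : ℝ)) / (d : ℝ)) '' K with hA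
  have hd0 : (0:ℝ) < (d:ℝ) := by
    have : 0 < d := by omega
    exact_mod_cast this
  have hfin : volume K ≠ ⊤ := hc.measure_lt_top.ne
  have hAcomp : ∀ l, IsCompact (A l) := fun l =>
    hc.image (by fun_prop)
  have hAmeas : ∀ l, MeasurableSet (A l) := fun l => (hAcomp l).measurableSet
  have hvolA : ∀ l, volume (A l) = ENNReal.ofReal (d:ℝ)⁻¹ * volume K := fun l =>
    volPhi hd0 (n l : ℝ) K
  have hsum : ∑ l : Fin d, volume (A l) = volume K := by
    rw [Finset.sum_congr rfl (fun l _ => hvolA l), Finset.sum_const, Finset.card_univ,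
      Fintype.card_fin, nsmul_eq_mul]
    rw [ENNReal.ofReal_inv_of_pos hd0, ENNReal.ofReal_natCast, ← mul_assoc,
      ENNReal.mul_inv_cancel (by exact_mod_cast (by omega : d ≠ 0)) (by simp), one_mul]
  have hKvol : volume K = volume (⋃ l, A l) := by rw [← hK]
  have hjmem : j ∈ Finset.univ.erase i := Finset.mem_erase.mpr ⟨hij.symm, Finset.mem_univ j⟩
  have hsumsplit : ∑ l : Fin d, volume (A l)
      = volume (A i) + (volume (A j) + ∑ l ∈ (Finset.univ.erase i).erase j, volume (A l)) := by
    rw [← Finset.add_sum_erase _ _ (Finset.mem_univ i), ← Finset.add_sum_erase _ _ hjmem]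
  have hle : volume K + volume (A i ∩ A j) ≤ volume K := by
    have hsubset : (⋃ l, A l) ⊆ (A i ∪ A j) ∪ ⋃ l ∈ (Finset.univ.erase i).erase j, A l := by
      intro x hx
      obtain ⟨l, hl⟩ := Set.mem_iUnion.mp hx
      by_cases hli : l = i
      · exact Or.inl (Or.inl (hli ▸ hl))
      by_cases hlj : l = j
      · exact Or.inl (Or.inr (hlj ▸ hl))
      · exact Or.inr (Set.mem_biUnion (Finset.mem_erase.mpr ⟨hlj,
          Finset.mem_erase.mpr ⟨hli, Finset.mem_univ l⟩⟩) hl)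
    calc volume K + volume (A i ∩ A j)
        ≤ (volume (A i ∪ A j) + ∑ l ∈ (Finset.univ.erase i).erase j, volume (A l))
            + volume (A i ∩ A j) := by
          gcongr
          rw [hKvol]
          exact (measure_mono hsubset).trans ((measure_union_le _ _).trans
            (by gcongr; exact measure_biUnion_finset_le _ _))
      _ = (volume (A i ∪ A j) + volume (A i ∩ A j))
            + ∑ l ∈ (Finset.univ.erase i).erase j, volume (A l) := by ring
      _ = (volume (A i) + volume (A j))
            + ∑ l ∈ (Finset.univ.erase i).erase j, volume (A l) := by
          rw [measure_union_add_inter _ (hAmeas j)]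
      _ = ∑ l : Fin d, volume (A l) := by rw [hsumsplit, add_assoc]
      _ = volume K := hsum
  by_contra hne0
  exact absurd hle (not_le.mpr (ENNReal.lt_add_right hfin hne0))

lemma lemA (d : ℕ) (hd : 2 ≤ d) (n : Fin d → ℤ) (K : Set ℝ) (hc : IsCompact K)
    (hK : K = ⋃ i : Fin d, (fun x : ℝ => (x + (n i : ℝ)) / (d : ℝ)) '' K) (k : ℕ) :
    ∃ S : Finset ℤ,
      (⋃ m ∈ S, (fun x : ℝ => (x + (m : ℝ)) / (d : ℝ) ^ k) '' K) = K ∧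
      ∀ m ∈ S, ∀ m' ∈ S, m ≠ m' →
        volume (((fun x : ℝ => (x + (m : ℝ)) / (d : ℝ) ^ k) '' K) ∩
          ((fun x : ℝ => (x + (m' : ℝ)) / (d : ℝ) ^ k) '' K)) = 0 := by
  have hd0 : (0:ℝ) < (d:ℝ) := by exact_mod_cast (by omega : 0 < d)
  have hdk : ∀ k : ℕ, (0:ℝ) < (d:ℝ) ^ k := fun k => pow_pos hd0 k
  have hAK : ∀ i : Fin d, (fun x : ℝ => (x + (n i : ℝ)) / (d : ℝ)) '' K ⊆ K := by
    intro i x hx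
    rw [hK]
    exact Set.mem_iUnion.mpr ⟨i, hx⟩
  induction k with
  | zero =>
    refine ⟨{0}, ?_, ?_⟩
    · simp
    · intro m hm m' hm' hne
      simp only [Finset.mem_singleton] at hm hm'
      exact absurd (hm.trans hm'.symm) hne
  | succ k ih =>
    obtain ⟨S, hU, hDisj⟩ := ih
    have hcomp : ∀ (m : ℤ) (i : Fin d),
        (fun x : ℝ => (x + ((n i + (d:ℤ) * m : ℤ) : ℝ)) / (d : ℝ) ^ (k+1)) '' K
        = (fun y : ℝ => (y + (m : ℝ)) / (d : ℝ) ^ k) ''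
            ((fun x : ℝ => (x + (n i : ℝ)) / (d : ℝ)) '' K) := by
      intro m i
      rw [Set.image_image]
      apply Set.image_congr'
      intro x
      push_cast
      field_simp
      ring
    refine ⟨(S ×ˢ (Finset.univ : Finset (Fin d))).image
      (fun p : ℤ × Fin d => n p.2 + (d : ℤ) * p.1), ?_, ?_⟩
    · apply Set.Subset.antisymm
      · intro x hx
        obtain ⟨s, hs, hxs⟩ := by
          simpa only [Set.mem_iUnion, exists_prop] using hx
        obtain ⟨⟨m, i⟩, hmi, rfl⟩ := Finset.mem_image.mp hs
        simp only [Finset.mem_product] at hmi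
        rw [hcomp m i] at hxs
        have : x ∈ (fun y : ℝ => (y + (m : ℝ)) / (d : ℝ) ^ k) '' K :=
          Set.image_mono (hAK i) hxs
        rw [← hU]
        exact Set.mem_iUnion₂.mpr ⟨m, hmi.1, this⟩
      · intro x hx
        rw [← hU] at hx
        obtain ⟨m, hm, y, hy, hxy⟩ := by
          simpa only [Set.mem_iUnion, exists_prop, Set.mem_image] using hx
        have hy' : y ∈ ⋃ i : Fin d, (fun x : ℝ => (x + (n i : ℝ)) / (d : ℝ)) '' K := hK ▸ hy
        obtain ⟨i, z, hz, hzy⟩ := by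
          simpa only [Set.mem_iUnion, Set.mem_image] using hy'
        refine Set.mem_iUnion₂.mpr ⟨n i + (d:ℤ) * m, ?_, ?_⟩
        · exact Finset.mem_image.mpr ⟨(m, i), Finset.mem_product.mpr
            ⟨hm, Finset.mem_univ i⟩, rfl⟩
        · rw [hcomp m i]
          exact ⟨y, ⟨z, hz, hzy⟩, hxy⟩
    · intro s hs t ht hst
      obtain ⟨⟨m, i⟩, hmi, rfl⟩ := Finset.mem_image.mp hs
      obtain ⟨⟨m', j⟩, hmj, rfl⟩ := Finset.mem_image.mp ht
      simp only [Finset.mem_product] at hmi hmj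
      rw [hcomp m i, hcomp m' j]
      by_cases hmm : m = m'
      · subst hmm
        have hnij : n i ≠ n j := by
          intro h
          exact hst (by rw [h])
        have hij : i ≠ j := fun h => hnij (by rw [h])
        rw [← Set.image_inter (injPhi (hdk k) (m : ℝ))]
        rw [volPhi (hdk k)]
        rw [level1 d hd n K hc hK i j hij, mul_zero]
      · refine measure_mono_null (Set.inter_subset_inter ?_ ?_) (hDisj m hmi.1 m' hmj.1 hmm) <;>
          exact Set.image_mono (hAK _)

/-- **Tiling Theorem** for `f(z) = z^d`: if the attractor `K` of the lifted
iterated function system `gᵢ(x) = (x + nᵢ)/d` has positive Lebesgue measure,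
then `K` tiles the real line by integer translations. -/
theorem tiling_of_pos_measure_pow_d (d : ℕ) (hd : 2 ≤ d) (n : Fin d → ℤ)
    (K : Set ℝ) (hne : K.Nonempty) (hc : IsCompact K)
    (hK : K = ⋃ i : Fin d, (fun x : ℝ => (x + (n i : ℝ)) / (d : ℝ)) '' K)
    (hpos : 0 < volume K) :
    ∃ T : Set ℤ,
      (⋃ t ∈ T, (fun x : ℝ => x + (t : ℝ)) '' K) = Set.univ ∧
      ∀ s ∈ T, ∀ t ∈ T, s ≠ t →
        volume (((fun x : ℝ => x + (s : ℝ)) '' K) ∩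
          ((fun x : ℝ => x + (t : ℝ)) '' K)) = 0 := by
  classical
  have hd0 : (0:ℝ) < (d:ℝ) := by exact_mod_cast (by omega : 0 < d)
  have hd1 : (1:ℝ) < (d:ℝ) := by exact_mod_cast (by omega : 1 < d)
  have hdk : ∀ k : ℕ, (0:ℝ) < (d:ℝ) ^ k := fun k => pow_pos hd0 k
  have hKm : MeasurableSet K := hc.measurableSet
  -- a bound for K
  obtain ⟨D0, hD0⟩ := hc.isBounded.subset_closedBall 0
  set D : ℝ := max D0 0 with hDdef
  have hDnn : (0:ℝ) ≤ D := le_max_right _ _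
  have habs : ∀ x ∈ K, |x| ≤ D := by
    intro x hx
    have h1 := hD0 hx
    rw [mem_closedBall, Real.dist_eq, sub_zero] at h1
    exact h1.trans (le_max_left _ _)
  -- the multiscale structure
  choose S hSU hSdisj using lemA d hd n K hc hK
  -- a Lebesgue density point of K
  have hae := Besicovitch.ae_tendsto_measure_inter_div volume K
  have hres : (volume.restrict K) ≠ 0 := by
    rw [Ne, Measure.restrict_eq_zero]
    exact hpos.ne'
  have : (ae (volume.restrict K)).NeBot := ae_neBot.mpr hres
  obtain ⟨x₀, hx₀d, hx₀K⟩ := (hae.and (ae_restrict_mem hKm)).exists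
  -- choose the address of x₀ at every scale
  have hchoose : ∀ k : ℕ, ∃ m ∈ S k, ∃ y ∈ K, (y + (m:ℝ)) / (d:ℝ)^k = x₀ := by
    intro k
    have hx : x₀ ∈ ⋃ m ∈ S k, (fun x : ℝ => (x + (m:ℝ))/(d:ℝ)^k) '' K := (hSU k).symm ▸ hx₀K
    obtain ⟨m, hm, y, hy, hxy⟩ := by
      simpa only [Set.mem_iUnion, exists_prop, Set.mem_image] using hx
    exact ⟨m, hm, y, hy, hxy⟩
  choose m hmS y hyK hxy using hchoose
  -- the ultrafilter and the tiling set
  set U : Ultrafilter ℕ := Ultrafilter.of atTop with hUdef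
  have hatTop : ∀ {s : Set ℕ}, s ∈ (atTop : Filter ℕ) → s ∈ U :=
    fun hs => Ultrafilter.of_le atTop hs
  set T : Set ℤ := {t : ℤ | {k : ℕ | t + m k ∈ S k} ∈ U} with hTdef
  have hx₀abs : |x₀| ≤ D := habs x₀ hx₀K
  -- disjointness
  have hdisjT : ∀ s ∈ T, ∀ t ∈ T, s ≠ t →
      volume (((fun x : ℝ => x + (s : ℝ)) '' K) ∩ ((fun x : ℝ => x + (t : ℝ)) '' K)) = 0 := by
    intro s hsT t htT hst
    obtain ⟨k, hks, hkt⟩ : ∃ k, s + m k ∈ S k ∧ t + m k ∈ S k := by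
      obtain ⟨k, hk⟩ := Filter.nonempty_of_mem (Filter.inter_mem hsT htT)
      exact ⟨k, hk.1, hk.2⟩
    have key : ∀ u : ℤ, (fun x : ℝ => x + (u:ℝ)) '' K
        = (fun x : ℝ => (d:ℝ)^k * x - (m k : ℝ)) ''
            ((fun x : ℝ => (x + ((u + m k : ℤ):ℝ))/(d:ℝ)^k) '' K) := by
      intro u
      rw [Set.image_image]
      apply Set.image_congr'
      intro x
      push_cast
      field_simp
      ring
    rw [key s, key t, ← Set.image_inter (injPsi (hdk k) (m k : ℝ)), volPsi (hdk k)]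
    rw [hSdisj k _ hks _ hkt (fun h => hst (by omega)), mul_zero]
  -- the union
  set W : Set ℝ := ⋃ t ∈ T, (fun x : ℝ => x + (t:ℝ)) '' K with hWdef
  have hWclosed : IsClosed W := by
    apply IsSeqClosed.isClosed
    intro u p hu hup
    have hu' : ∀ nn : ℕ, ∃ t ∈ T, ∃ κ ∈ K, κ + (t:ℝ) = u nn := by
      intro nn
      obtain ⟨tt, htT, hmem⟩ := Set.mem_iUnion₂.mp (hu nn)
      obtain ⟨κ, hκ, hκt⟩ := hmem
      exact ⟨tt, htT, κ, hκ, hκt⟩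
    choose t ht κ hκ hκt using hu'
    have hbd : ∀ᶠ nn in atTop, |u nn - p| ≤ 1 := by
      have h1 := hup (closedBall_mem_nhds p one_pos)
      filter_upwards [h1] with nn hnn
      rw [Set.mem_preimage, mem_closedBall, Real.dist_eq] at hnn
      exact hnn
    set N : ℤ := ⌈|p| + 1 + D⌉ with hNdef
    have hmemF : ∀ᶠ nn in atTop, t nn ∈ Finset.Icc (-N) N := by
      filter_upwards [hbd] with nn h
      have hκabs := habs _ (hκ nn)
      have heq : (t nn : ℝ) = u nn - κ nn := by rw [← hκt nn]; ring
      have h1 : |(t nn : ℝ)| ≤ |p| + 1 + D := by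
        rw [heq]
        calc |u nn - κ nn| ≤ |u nn - p| + |p| + |κ nn| := by
              have := abs_sub_abs_le_abs_sub (u nn) p
              have h3 : u nn - κ nn = (u nn - p) + p + (- κ nn) := by ring
              rw [h3]
              calc |(u nn - p) + p + (- κ nn)| ≤ |(u nn - p) + p| + |(- κ nn)| := abs_add_le _ _
                _ ≤ |u nn - p| + |p| + |κ nn| := by
                    rw [abs_neg]
                    gcongr
                    exact abs_add_le _ _
          _ ≤ |p| + 1 + D := by rw [add_comm |u nn - p| |p|]; gcongr
      have h2 : |(t nn : ℝ)| ≤ (N : ℝ) := h1.trans (Int.le_ceil _)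
      rw [Finset.mem_Icc]
      rw [abs_le] at h2
      constructor
      · exact_mod_cast h2.1
      · exact_mod_cast h2.2
    have hfreq : ∃ t0 ∈ Finset.Icc (-N) N, ∃ᶠ nn in atTop, t nn = t0 := by
      by_contra hcon
      push_neg at hcon
      have hev : ∀ᶠ nn in atTop, ∀ t0 ∈ Finset.Icc (-N) N, t nn ≠ t0 :=
        (Filter.eventually_all_finset (Finset.Icc (-N) N)).mpr (fun t0 ht0 => hcon t0 ht0)
      obtain ⟨nn, h1, h2⟩ := (hev.and hmemF).exists
      exact h1 _ h2 rfl
    obtain ⟨t0, _, hfr⟩ := hfreq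
    have ht0T : t0 ∈ T := by
      obtain ⟨nn, hnn⟩ := hfr.exists
      exact hnn ▸ ht nn
    have hclosed : IsClosed ((fun x : ℝ => x + (t0:ℝ)) '' K) :=
      (hc.image (by fun_prop)).isClosed
    have hp : p ∈ (fun x : ℝ => x + (t0:ℝ)) '' K := by
      apply hclosed.mem_of_frequently_of_tendsto ?_ hup
      refine hfr.mono ?_
      intro nn hnn
      exact ⟨κ nn, hκ nn, by rw [← hnn]; exact hκt nn⟩
    exact Set.mem_biUnion ht0T hp
  -- the covering estimate
  have hcover : ∀ R : ℝ, 0 < R → volume (closedBall x₀ R \ W) = 0 := by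
    intro R hR
    refine le_antisymm ?_ (by simp)
    apply ENNReal.le_of_forall_pos_le_add
    intro ε hε _
    rw [zero_add]
    set C : ℝ := 2*(R + 2*D) + 1 with hCdef
    have hRD : (0:ℝ) < R + 2*D := by linarith
    have hCpos : (0:ℝ) < C := by linarith
    set ε' : ℝ := min ((ε:ℝ) / C) 1 with hε'def
    have hε'pos : 0 < ε' := lt_min (div_pos (by exact_mod_cast hε) hCpos) one_pos
    set e : ENNReal := ENNReal.ofReal ε' with hedef
    have he0 : e ≠ 0 := by
      simp only [hedef, Ne, ENNReal.ofReal_eq_zero, not_le]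
      exact hε'pos
    have he1 : e ≤ 1 := by
      rw [hedef, ← ENNReal.ofReal_one]
      exact ENNReal.ofReal_le_ofReal (min_le_right _ _)
    -- density estimate
    obtain ⟨ρ₀, hρ₀pos, hρ₀⟩ : ∃ ρ₀ > 0, ∀ ρ, 0 < ρ → ρ ≤ ρ₀ →
        volume (closedBall x₀ ρ \ K) ≤ e * volume (closedBall x₀ ρ) := by
      have h1e : (1:ℝ≥0∞) - e < 1 := ENNReal.sub_lt_self ENNReal.one_ne_top one_ne_zero he0
      have hev : ∀ᶠ r in 𝓝[>] (0:ℝ),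
          1 - e < volume (K ∩ closedBall x₀ r) / volume (closedBall x₀ r) :=
        hx₀d (Ioi_mem_nhds h1e)
      obtain ⟨ρ₀, hρ₀Ioi, hsub⟩ := mem_nhdsGT_iff_exists_Ioc_subset.mp hev
      refine ⟨ρ₀, hρ₀Ioi, ?_⟩
      intro ρ hρpos hρle
      have hρ : ρ ∈ Set.Ioc (0:ℝ) ρ₀ := ⟨hρpos, hρle⟩
      have hlt := hsub hρ
      set b : ℝ≥0∞ := volume (closedBall x₀ ρ) with hbdef
      have hb0 : b ≠ 0 := by
        rw [hbdef, Real.volume_closedBall]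
        simp only [Ne, ENNReal.ofReal_eq_zero, not_le]
        linarith
      have hbt : b ≠ ⊤ := by
        rw [hbdef, Real.volume_closedBall]
        exact ENNReal.ofReal_ne_top
      have hlt' : 1 - e ≤ volume (K ∩ closedBall x₀ ρ) / b := le_of_lt hlt
      have hKb : (1 - e) * b ≤ volume (K ∩ closedBall x₀ ρ) := by
        calc (1 - e) * b ≤ (volume (K ∩ closedBall x₀ ρ) / b) * b := by gcongr
          _ = volume (K ∩ closedBall x₀ ρ) := ENNReal.div_mul_cancel hb0 hbt
      have hsplit : volume (closedBall x₀ ρ ∩ K) + volume (closedBall x₀ ρ \ K) = b :=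
        measure_inter_add_diff _ hKm
      have hbb : b ≤ volume (closedBall x₀ ρ ∩ K) + e * b := by
        have h2 : b = (1 - e) * b + e * b := by
          rw [← add_mul, tsub_add_cancel_of_le he1, one_mul]
        rw [Set.inter_comm]
        calc b = (1 - e) * b + e * b := h2
          _ ≤ volume (K ∩ closedBall x₀ ρ) + e * b := by gcongr
      have hfin2 : volume (closedBall x₀ ρ ∩ K) ≠ ⊤ :=
        (lt_of_le_of_lt (measure_mono Set.inter_subset_left) measure_closedBall_lt_top).ne
      have := hsplit.le.trans hbb
      exact (ENNReal.add_le_add_iff_left hfin2).mp this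
    -- choose the scale k
    set NR : ℤ := ⌈R + 2*D⌉ with hNRdef
    have hcond1 : {k : ℕ | (R + 2*D) / ρ₀ ≤ (d:ℝ)^k} ∈ U :=
      hatTop ((tendsto_pow_atTop_atTop_of_one_lt hd1).eventually_ge_atTop ((R + 2*D)/ρ₀))
    have hcond2 : {k : ℕ | ∀ t ∈ Finset.Icc (-NR) NR, t + m k ∈ S k → t ∈ T} ∈ U := by
      have hall : ∀ t ∈ Finset.Icc (-NR) NR, {k : ℕ | t + m k ∈ S k → t ∈ T} ∈ U := by
        intro t _
        by_cases htT : t ∈ T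
        · exact Filter.mem_of_superset Filter.univ_mem (fun k _ => fun _ => htT)
        · refine Filter.mem_of_superset (Ultrafilter.compl_mem_iff_notMem.mpr htT) ?_
          intro k hk hmem
          exact absurd hmem hk
      have hInter := (Filter.biInter_finset_mem (Finset.Icc (-NR) NR)).mpr hall
      refine Filter.mem_of_superset hInter ?_
      intro k hk t htmem
      exact Set.mem_iInter₂.mp hk t htmem
    obtain ⟨k, hk1, hk2⟩ := Filter.nonempty_of_mem (Filter.inter_mem hcond1 hcond2)
    set P : ℝ := (d:ℝ)^k with hPdef
    have hP : (0:ℝ) < P := hdk k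
    have hk1' : (R + 2*D) / ρ₀ ≤ P := hk1
    have hρk : (R + 2*D)/P ≤ ρ₀ := by
      rw [div_le_iff₀ hP]
      calc R + 2*D = ((R + 2*D)/ρ₀) * ρ₀ := by field_simp
        _ ≤ P * ρ₀ := mul_le_mul_of_nonneg_right hk1' (le_of_lt hρ₀pos)
        _ = ρ₀ * P := mul_comm _ _
    have hρkpos : 0 < (R + 2*D)/P := div_pos hRD hP
    -- inclusion (i) : the badly covered part
    have hinc1 : closedBall x₀ R \ ((fun x : ℝ => P * x - (m k : ℝ)) '' K)
        ⊆ (fun x : ℝ => P * x - (m k : ℝ)) '' (closedBall x₀ ((R + 2*D)/P) \ K) := by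
      intro z hz
      obtain ⟨hzball, hznot⟩ := hz
      set w : ℝ := (z + (m k : ℝ))/P with hwdef
      have hwz : P * w - (m k : ℝ) = z := by
        rw [hwdef]; field_simp; ring
      refine ⟨w, ⟨?_, ?_⟩, hwz⟩
      · rw [mem_closedBall, Real.dist_eq]
        have hx₀w : w - x₀ = (z - y k)/P := by
          rw [hwdef, ← hxy k]
          field_simp
          rw [hPdef]; ring
        rw [hx₀w, abs_div, abs_of_pos hP, div_le_div_iff₀ hP hP]
        have hzx₀ : |z - x₀| ≤ R := by
          rw [mem_closedBall, Real.dist_eq] at hzball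
          exact hzball
        have hyabs := habs _ (hyK k)
        calc |z - y k| * P = P * |z - y k| := by ring
          _ ≤ P * (R + 2*D) := by
              gcongr
              calc |z - y k| = |(z - x₀) + (x₀ - y k)| := by ring_nf
                _ ≤ |z - x₀| + |x₀ - y k| := abs_add_le _ _
                _ ≤ R + (|x₀| + |y k|) := by
                    gcongr
                    exact (abs_sub _ _)
                _ ≤ R + 2*D := by
                    have := hx₀abs
                    gcongr <;> linarith [hx₀abs, hyabs]
          _ = (R + 2*D) * P := by ring
      · intro hwK
        exact hznot ⟨w, hwK, hwz⟩
    -- inclusion (ii) : the rest is covered by W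
    have hinc2 : closedBall x₀ R ∩ ((fun x : ℝ => P * x - (m k : ℝ)) '' K) ⊆ W := by
      rintro z ⟨hzball, x, hxK, hxz⟩
      have hx' : x ∈ ⋃ m' ∈ S k, (fun x : ℝ => (x + (m':ℝ))/(d:ℝ)^k) '' K := (hSU k).symm ▸ hxK
      obtain ⟨m', hm', y', hy', hxy'⟩ := by
        simpa only [Set.mem_iUnion, exists_prop, Set.mem_image] using hx'
      set t : ℤ := m' - m k with htdef
      have hzyt : z = y' + (t:ℝ) := by
        rw [htdef, ← hxz, ← hxy']
        push_cast
        field_simp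
        ring
      have htm : t + m k ∈ S k := by
        rw [htdef]
        simpa using hm'
      have htabs : |(t:ℝ)| ≤ R + 2*D := by
        have h1 : (t:ℝ) = z - y' := by rw [hzyt]; ring
        rw [h1]
        have hzx₀ : |z - x₀| ≤ R := by
          rw [mem_closedBall, Real.dist_eq] at hzball
          exact hzball
        have hy'abs := habs _ hy'
        calc |z - y'| = |(z - x₀) + (x₀ - y')| := by ring_nf
          _ ≤ |z - x₀| + |x₀ - y'| := abs_add_le _ _
          _ ≤ R + (|x₀| + |y'|) := by
              gcongr
              exact (abs_sub _ _)
          _ ≤ R + 2*D := by gcongr <;> linarith [hx₀abs, hy'abs]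
      have htIcc : t ∈ Finset.Icc (-NR) NR := by
        have h2 : |(t:ℝ)| ≤ (NR:ℝ) := htabs.trans (Int.le_ceil _)
        rw [abs_le] at h2
        rw [Finset.mem_Icc]
        constructor
        · exact_mod_cast h2.1
        · exact_mod_cast h2.2
      have htT : t ∈ T := hk2 t htIcc htm
      exact Set.mem_biUnion htT ⟨y', hy', hzyt.symm⟩
    -- putting things together
    have hmain : closedBall x₀ R \ W
        ⊆ (fun x : ℝ => P * x - (m k : ℝ)) '' (closedBall x₀ ((R + 2*D)/P) \ K) := by
      intro z hz
      apply hinc1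
      refine ⟨hz.1, ?_⟩
      intro hzim
      exact hz.2 (hinc2 ⟨hz.1, hzim⟩)
    calc volume (closedBall x₀ R \ W)
        ≤ volume ((fun x : ℝ => P * x - (m k : ℝ)) '' (closedBall x₀ ((R + 2*D)/P) \ K)) :=
          measure_mono hmain
      _ = ENNReal.ofReal P * volume (closedBall x₀ ((R + 2*D)/P) \ K) := volPsi hP _ _
      _ ≤ ENNReal.ofReal P * (e * volume (closedBall x₀ ((R + 2*D)/P))) := by
          gcongr
          exact hρ₀ _ hρkpos hρk
      _ = ENNReal.ofReal P * (e * ENNReal.ofReal (2 * ((R + 2*D)/P))) := by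
          rw [Real.volume_closedBall]
      _ = e * (ENNReal.ofReal P * ENNReal.ofReal (2 * ((R + 2*D)/P))) := by ring
      _ = e * ENNReal.ofReal (P * (2 * ((R + 2*D)/P))) := by
          rw [ENNReal.ofReal_mul (le_of_lt hP)]
      _ = e * ENNReal.ofReal (2*(R + 2*D)) := by
          congr 2
          field_simp
      _ ≤ ENNReal.ofReal ((ε:ℝ)/C) * ENNReal.ofReal (2*(R + 2*D)) := by
          gcongr
          exact ENNReal.ofReal_le_ofReal (min_le_left _ _)
      _ = ENNReal.ofReal (((ε:ℝ)/C) * (2*(R + 2*D))) := by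
          rw [ENNReal.ofReal_mul (le_of_lt (div_pos (by exact_mod_cast hε) hCpos))]
      _ ≤ ENNReal.ofReal (ε:ℝ) := by
          apply ENNReal.ofReal_le_ofReal
          rw [div_mul_eq_mul_div, div_le_iff₀ hCpos]
          have hεnn : (0:ℝ) ≤ (ε:ℝ) := ε.coe_nonneg
          nlinarith
      _ = (ε : ℝ≥0∞) := ENNReal.ofReal_coe_nnreal
  -- conclude
  have hWcnull : volume Wᶜ = 0 := by
    have hsub : Wᶜ ⊆ ⋃ N : ℕ, (closedBall x₀ ((N:ℝ)+1) \ W) := by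
      intro z hz
      refine Set.mem_iUnion.mpr ⟨⌈dist z x₀⌉₊, ?_, hz⟩
      rw [mem_closedBall]
      calc dist z x₀ ≤ (⌈dist z x₀⌉₊ : ℝ) := Nat.le_ceil _
        _ ≤ (⌈dist z x₀⌉₊ : ℝ) + 1 := by linarith
    refine measure_mono_null hsub (measure_iUnion_null (fun N => hcover _ (by positivity)))
  have hWuniv : W = Set.univ := by
    rw [← Set.compl_empty_iff]
    by_contra h
    have hpos' := hWclosed.isOpen_compl.measure_pos volume (Set.nonempty_iff_ne_empty.mpr h)
    exact absurd hWcnull hpos'.ne'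
  exact ⟨T, hWuniv, hdisjT⟩
end

section
/- There exists a natural number n (the multiplicity) such that: Leb(K) = n; for Haar-almost every point p of the unit circle S¹ the fiber π^{-1}(p) is finite with exactly n elements; and for every point p of S¹ the fiber π^{-1}(p) has at least n elements. (This is the paper's Multiplicity Theorem in the case f(z) = z^d.) -/
open MeasureTheory

/-- The Haar probability measure on the unit circle `S¹ ⊆ ℂ`, realized as the
pushforward of Lebesgue measure on `[0,1)` under `x ↦ exp(2πix)`. -/
noncomputable def circleMeasure : Measure ℂ :=
  Measure.map (fun x : ℝ => Complex.exp (2 * Real.pi * Complex.I * (x : ℂ)))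
    (volume.restrict (Set.Ico (0 : ℝ) 1))

/-- The coding map `π : {1,…,d}^ℕ → S¹`, `π(ω) = exp(2πi ∑ₖ n_{ω_k} d^{-k})`. -/
noncomputable def codingMap (d : ℕ) (n : Fin d → ℤ) (ω : ℕ → Fin d) : ℂ :=
  Complex.exp (2 * Real.pi * Complex.I *
    ((∑' k : ℕ, (n (ω k) : ℝ) / (d : ℝ) ^ (k + 1) : ℝ) : ℂ))

namespace MultAux
open MeasureTheory Set Filter Topology Pointwise
open scoped ENNReal NNReal Classical

open MeasureTheory Set Filter Topology


variable {d : ℕ}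

/-- the real-valued coding series -/
noncomputable def F (n : Fin d → ℤ) (ω : ℕ → Fin d) : ℝ :=
  ∑' k : ℕ, (n (ω k) : ℝ) / (d : ℝ) ^ (k + 1)

/-- the contraction maps -/
noncomputable def gm (n : Fin d → ℤ) (i : Fin d) : ℝ → ℝ :=
  fun x => (x + (n i : ℝ)) / (d : ℝ)

/-- partial sums -/
noncomputable def P (n : Fin d → ℤ) (k : ℕ) (ω : ℕ → Fin d) : ℝ :=
  ∑ j ∈ Finset.range k, (n (ω j) : ℝ) / (d : ℝ) ^ (j + 1)

variable (n : Fin d → ℤ)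

lemma dpos (hd : 2 ≤ d) : (0:ℝ) < (d:ℝ) := by
  have : (0:ℕ) < d := by omega
  exact_mod_cast this

lemma done' (hd : 2 ≤ d) : (1:ℝ) < (d:ℝ) := by
  have : (1:ℕ) < d := by omega
  exact_mod_cast this

lemma summable_aux (hd : 2 ≤ d) (ω : ℕ → Fin d) :
    Summable (fun k : ℕ => (n (ω k) : ℝ) / (d : ℝ) ^ (k + 1)) := by
  have hd0 := dpos hd
  have hd1 := done' hd
  set C : ℝ := ∑ i : Fin d, |(n i : ℝ)| with hC
  have hCnn : ∀ i, |(n i : ℝ)| ≤ C := fun i =>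
    Finset.single_le_sum (f := fun i => |(n i : ℝ)|) (fun j _ => abs_nonneg _) (Finset.mem_univ i)
  have hgeo : Summable (fun k : ℕ => C * ((d:ℝ)⁻¹) ^ k) :=
    (summable_geometric_of_lt_one (by positivity) (by
      rw [inv_lt_one_iff₀]; right; exact hd1)).mul_left C
  refine Summable.of_norm_bounded hgeo (fun k => ?_)
  rw [Real.norm_eq_abs, abs_div, abs_pow, abs_of_pos hd0]
  have h1 : (d:ℝ) ^ k ≤ (d:ℝ) ^ (k+1) := by
    apply pow_le_pow_right₀ hd1.le (by omega)
  have h2 : |(n (ω k) : ℝ)| / (d:ℝ) ^ (k+1) ≤ C / (d:ℝ)^k := by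
    apply div_le_div₀ (by positivity) (hCnn _) (by positivity) h1
  calc |(n (ω k) : ℝ)| / (d:ℝ) ^ (k+1) ≤ C / (d:ℝ)^k := h2
    _ = C * ((d:ℝ)⁻¹)^k := by rw [div_eq_mul_inv, inv_pow]

lemma P_succ (hd : 2 ≤ d) (ω : ℕ → Fin d) (k : ℕ) :
    P n (k+1) ω = (n (ω 0) : ℝ) / (d:ℝ) + P n k (fun j => ω (j+1)) / (d:ℝ) := by
  rw [P, Finset.sum_range_succ' (fun j => (n (ω j) : ℝ) / (d : ℝ) ^ (j + 1)) k, add_comm]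
  congr 1
  · norm_num
  · rw [P, Finset.sum_div]
    apply Finset.sum_congr rfl
    intro j _
    rw [div_div, ← pow_succ]

lemma F_shift (hd : 2 ≤ d) (ω : ℕ → Fin d) :
    F n ω = ((n (ω 0) : ℝ) + F n (fun k => ω (k + 1))) / (d : ℝ) := by
  have hs := summable_aux n hd ω
  have h0 := hs.tsum_eq_zero_add
  have htail : (∑' k : ℕ, (n (ω (k+1)) : ℝ) / (d : ℝ) ^ (k + 1 + 1))
      = F n (fun k => ω (k + 1)) / (d:ℝ) := by
    rw [F, ← tsum_div_const]
    apply tsum_congr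
    intro k
    rw [div_div, ← pow_succ]
  rw [F, h0, add_div, htail]
  norm_num

lemma F_split (hd : 2 ≤ d) (ω : ℕ → Fin d) (k : ℕ) :
    F n ω = P n k ω + F n (fun j => ω (j + k)) / (d : ℝ) ^ k := by
  induction k generalizing ω with
  | zero => simp [P]
  | succ k ih =>
    have hd0 := dpos hd
    rw [F_shift n hd ω]
    have := ih (fun j => ω (j + 1))
    have heq : (fun j => (fun j' => ω (j' + 1)) (j + k)) = fun j => ω (j + (k+1)) := by
      funext j; rfl
    rw [heq] at this
    rw [this]
    rw [P_succ n hd ω k]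
    field_simp
    ring

variable {K : Set ℝ}

lemma mem_g (hK : K = ⋃ i : Fin d, gm n i '' K) {x : ℝ} (hx : x ∈ K) (i : Fin d) :
    gm n i x ∈ K := by
  have : gm n i x ∈ ⋃ i : Fin d, gm n i '' K := mem_iUnion.2 ⟨i, mem_image_of_mem _ hx⟩
  rwa [← hK] at this

lemma F_mem (hd : 2 ≤ d) (hne : K.Nonempty) (hc : IsCompact K)
    (hK : K = ⋃ i : Fin d, gm n i '' K) (ω : ℕ → Fin d) : F n ω ∈ K := by
  obtain ⟨x₀, hx₀⟩ := hne
  have hd0 := dpos hd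
  have key : ∀ k (ω : ℕ → Fin d), P n k ω + x₀ / (d:ℝ) ^ k ∈ K := by
    intro k
    induction k with
    | zero => intro ω; simpa [P] using hx₀
    | succ k ih =>
      intro ω
      have h1 := ih (fun j => ω (j + 1))
      have h2 := mem_g n hK h1 (ω 0)
      have heq : gm n (ω 0) (P n k (fun j => ω (j+1)) + x₀ / (d:ℝ)^k)
          = P n (k+1) ω + x₀ / (d:ℝ)^(k+1) := by
        rw [gm]
        rw [P_succ n hd ω k]
        field_simp
        ring
      rw [heq] at h2
      exact h2
  -- limit
  have hlim : Tendsto (fun k => P n k ω + x₀ / (d:ℝ)^k) atTop (𝓝 (F n ω)) := by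
    have h1 : Tendsto (fun k => P n k ω) atTop (𝓝 (F n ω)) :=
      (summable_aux n hd ω).hasSum.tendsto_sum_nat
    have h2 : Tendsto (fun k : ℕ => x₀ / (d:ℝ)^k) atTop (𝓝 0) := by
      have : Tendsto (fun k : ℕ => ((d:ℝ)⁻¹)^k) atTop (𝓝 0) := by
        apply tendsto_pow_atTop_nhds_zero_of_lt_one (by positivity)
        rw [inv_lt_one_iff₀]; right; exact done' hd
      have := this.const_mul x₀
      simpa [div_eq_mul_inv, inv_pow] using this
    simpa using h1.add h2
  exact hc.isClosed.mem_of_tendsto hlim (Eventually.of_forall (fun k => key k ω))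

lemma exists_coding (hd : 2 ≤ d) (hc : IsCompact K)
    (hK : K = ⋃ i : Fin d, gm n i '' K) {x : ℝ} (hx : x ∈ K) :
    ∃ ω : ℕ → Fin d, F n ω = x := by
  have hd0 := dpos hd
  have H : ∀ y : K, ∃ (i : Fin d) (z : K), (y : ℝ) = gm n i z := by
    rintro ⟨y, hy⟩
    rw [hK] at hy
    obtain ⟨i, z, hz, hgz⟩ := mem_iUnion.1 hy
    exact ⟨i, ⟨z, hz⟩, hgz.symm⟩
  classical
  choose idx nxt spec using H
  let step : K → K := nxt
  let orb : ℕ → K := fun k => step^[k] ⟨x, hx⟩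
  let ω : ℕ → Fin d := fun k => idx (orb k)
  have horb : ∀ k, (orb (k+1)) = nxt (orb k) := by
    intro k
    show step^[k+1] _ = _
    rw [Function.iterate_succ_apply']
  have key : ∀ k, x = P n k ω + (orb k : ℝ) / (d:ℝ)^k := by
    intro k
    induction k with
    | zero => simp [P, orb]
    | succ k ih =>
      rw [ih]
      have h1 : ((orb k : K) : ℝ) = gm n (ω k) (nxt (orb k)) := spec (orb k)
      rw [h1, ← horb k]
      rw [gm]
      have hP : P n (k+1) ω = P n k ω + (n (ω k) : ℝ) / (d:ℝ)^(k+1) := by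
        rw [P, P, Finset.sum_range_succ]
      rw [hP]
      field_simp
      ring
  -- bound
  obtain ⟨R, hR⟩ := hc.isBounded.subset_closedBall 0
  have hRb : ∀ y : K, |(y:ℝ)| ≤ R := by
    intro y
    have := hR y.2
    rwa [Metric.mem_closedBall, Real.dist_eq, sub_zero] at this
  have hlim : Tendsto (fun k => P n k ω) atTop (𝓝 x) := by
    have h2 : Tendsto (fun k : ℕ => x - P n k ω) atTop (𝓝 0) := by
      have hb : ∀ k, |x - P n k ω| ≤ R * ((d:ℝ)⁻¹)^k := by
        intro k
        rw [key k]
        have : P n k ω + (orb k : ℝ) / (d:ℝ)^k - P n k ω = (orb k : ℝ) / (d:ℝ)^k := by ring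
        rw [this, abs_div, abs_pow, abs_of_pos hd0, div_eq_mul_inv, inv_pow]
        exact mul_le_mul_of_nonneg_right (hRb _) (by positivity)
      have hg : Tendsto (fun k : ℕ => R * ((d:ℝ)⁻¹)^k) atTop (𝓝 0) := by
        have : Tendsto (fun k : ℕ => ((d:ℝ)⁻¹)^k) atTop (𝓝 0) := by
          apply tendsto_pow_atTop_nhds_zero_of_lt_one (by positivity)
          rw [inv_lt_one_iff₀]; right; exact done' hd
        simpa using this.const_mul R
      have hg' : Tendsto (fun k : ℕ => -(R * ((d:ℝ)⁻¹)^k)) atTop (𝓝 0) := by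
        simpa using hg.neg
      apply squeeze_zero_norm' (Eventually.of_forall hb) hg
    have := h2.const_sub x
    simpa using this
  have hlim2 : Tendsto (fun k => P n k ω) atTop (𝓝 (F n ω)) :=
    (summable_aux n hd ω).hasSum.tendsto_sum_nat
  exact ⟨ω, tendsto_nhds_unique hlim2 hlim⟩

/-- overlap set -/
def Ov (n : Fin d → ℤ) (K : Set ℝ) : Set ℝ :=
  ⋃ (p : Fin d × Fin d) (_ : p.1 ≠ p.2), (gm n p.1 '' K ∩ gm n p.2 '' K)

/-- the set of multiply-coded points -/
def UU (n : Fin d → ℤ) (K : Set ℝ) : Set ℝ :=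
  ⋃ (k : ℕ) (w : Fin k → Fin d),
    (fun z => (∑ j : Fin k, (n (w j) : ℝ) / (d:ℝ) ^ ((j:ℕ)+1)) + z / (d:ℝ)^k) '' Ov n K

lemma double_coding_mem (hd : 2 ≤ d) (hne : K.Nonempty) (hc : IsCompact K)
    (hK : K = ⋃ i : Fin d, gm n i '' K) {ω ω' : ℕ → Fin d}
    (hωω : ω ≠ ω') (hF : F n ω = F n ω') : F n ω ∈ UU n K := by
  have hd0 := dpos hd
  have hex : ∃ j, ω j ≠ ω' j := by
    by_contra h
    push_neg at h
    exact hωω (funext h)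
  classical
  let k := Nat.find hex
  have hk : ω k ≠ ω' k := Nat.find_spec hex
  have hheads : ∀ j < k, ω j = ω' j := fun j hj => of_not_not (Nat.find_min hex hj)
  have hPeq : P n k ω = P n k ω' := by
    apply Finset.sum_congr rfl
    intro j hj
    rw [hheads j (Finset.mem_range.1 hj)]
  have h1 := F_split n hd ω k
  have h2 := F_split n hd ω' k
  have htails : F n (fun j => ω (j + k)) = F n (fun j => ω' (j + k)) := by
    have := h1.symm.trans (hF.trans h2)
    rw [hPeq] at this
    have h3 := add_left_cancel this
    field_simp at h3
    exact h3
  set τ := fun j => ω (j + k) with hτ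
  set τ' := fun j => ω' (j + k) with hτ'
  have hτ0 : τ 0 = ω k := by simp [hτ]
  have hτ'0 : τ' 0 = ω' k := by simp [hτ']
  have hin1 : F n τ ∈ gm n (ω k) '' K := by
    rw [F_shift n hd τ, hτ0]
    refine ⟨F n (fun j => τ (j+1)), F_mem n hd hne hc hK _, ?_⟩
    rw [gm, add_comm]
  have hin2 : F n τ ∈ gm n (ω' k) '' K := by
    rw [htails, F_shift n hd τ', hτ'0]
    refine ⟨F n (fun j => τ' (j+1)), F_mem n hd hne hc hK _, ?_⟩
    rw [gm, add_comm]
  have hOv : F n τ ∈ Ov n K := by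
    rw [Ov]
    exact mem_iUnion.2 ⟨(ω k, ω' k), mem_iUnion.2 ⟨hk, hin1, hin2⟩⟩
  rw [UU]
  apply mem_iUnion.2 ⟨k, _⟩
  apply mem_iUnion.2 ⟨fun j : Fin k => ω j, _⟩
  refine ⟨F n τ, hOv, ?_⟩
  have hsum : (∑ j : Fin k, (n (ω (j:ℕ)) : ℝ) / (d:ℝ) ^ ((j:ℕ)+1)) = P n k ω := by
    rw [P]
    exact Fin.sum_univ_eq_sum_range (fun j => (n (ω j) : ℝ) / (d:ℝ) ^ (j+1)) k
  show (∑ j : Fin k, (n (ω (j:ℕ)) : ℝ) / (d:ℝ) ^ ((j:ℕ)+1)) + F n τ / (d:ℝ)^k = F n ω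
  rw [hsum]
  exact h1.symm



open MeasureTheory Set Filter Topology Pointwise
open scoped ENNReal


variable {d : ℕ} (n : Fin d → ℤ)

/-- the exponential covering map -/
noncomputable def e (x : ℝ) : ℂ := Complex.exp (2 * Real.pi * Complex.I * (x:ℂ))

lemma twoPiI_ne : (2 * (Real.pi:ℂ) * Complex.I) ≠ 0 := by
  apply mul_ne_zero (mul_ne_zero two_ne_zero _) Complex.I_ne_zero
  exact_mod_cast Complex.ofReal_ne_zero.2 Real.pi_ne_zero

lemma e_eq_iff {x y : ℝ} : e x = e y ↔ ∃ z : ℤ, x = y + z := by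
  rw [e, e, Complex.exp_eq_exp_iff_exists_int]
  constructor
  · rintro ⟨z, h⟩
    refine ⟨z, ?_⟩
    have h2 : (2 * (Real.pi:ℂ) * Complex.I) * (x:ℂ)
        = (2 * (Real.pi:ℂ) * Complex.I) * ((y:ℂ) + (z:ℂ)) := by
      rw [h]; push_cast; ring
    have h3 := mul_left_cancel₀ twoPiI_ne h2
    exact_mod_cast h3
  · rintro ⟨z, rfl⟩
    exact ⟨z, by push_cast; ring⟩

lemma norm_e (x : ℝ) : ‖e x‖ = 1 := by
  rw [e, Complex.norm_exp]
  have : (2 * (Real.pi:ℂ) * Complex.I * (x:ℂ)).re = 0 := by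
    simp [Complex.mul_re, Complex.mul_im]
  rw [this, Real.exp_zero]

lemma exists_t {p : ℂ} (hp : ‖p‖ = 1) : ∃ t ∈ Ico (0:ℝ) 1, e t = p := by
  set t0 : ℝ := Complex.arg p / (2 * Real.pi) with ht0
  have hpi : Real.pi ≠ 0 := Real.pi_ne_zero
  have h1 : e t0 = p := by
    rw [e]
    have harg : (2 * (Real.pi:ℂ) * Complex.I) * (t0:ℂ) = (Complex.arg p : ℂ) * Complex.I := by
      have hpiC : (Real.pi:ℂ) ≠ 0 := Complex.ofReal_ne_zero.2 hpi
      rw [ht0]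
      push_cast
      field_simp
    rw [harg]
    have := Complex.norm_mul_exp_arg_mul_I p
    rw [show ((‖p‖ : ℝ) : ℂ) = 1 by rw [hp]; norm_num] at this
    simpa using this
  refine ⟨Int.fract t0, ⟨Int.fract_nonneg t0, Int.fract_lt_one t0⟩, ?_⟩
  have : e (Int.fract t0) = e t0 := by
    rw [e_eq_iff]
    exact ⟨-⌊t0⌋, by rw [Int.fract]; push_cast; ring⟩
  rw [this, h1]

lemma continuous_e : Continuous e := by
  apply Complex.continuous_exp.comp
  exact continuous_const.mul Complex.continuous_ofReal

lemma measurable_e : Measurable e := continuous_e.measurable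

lemma e_add_int (x : ℝ) (z : ℤ) : e (x + z) = e x := by
  rw [e_eq_iff]; exact ⟨z, rfl⟩

section vol

lemma vol_smul_image (a : ℝ) (ha : 0 ≤ a) (B : Set ℝ) :
    volume ((fun y => a * y) '' B) = ENNReal.ofReal a * volume B := by
  have h1 : (fun y : ℝ => a * y) '' B = a • B := by
    rw [← Set.image_smul]
    rfl
  rw [h1, Measure.addHaar_smul]
  congr 1
  rw [Module.finrank_self, pow_one, abs_of_nonneg ha]

lemma vol_add_image (a : ℝ) (B : Set ℝ) :
    volume ((fun y => a + y) '' B) = volume B := by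
  have h1 : (fun y : ℝ => a + y) '' B = (fun y => y + (-a)) ⁻¹' B := by
    ext z
    simp only [mem_image, mem_preimage]
    constructor
    · rintro ⟨y, hy, rfl⟩; simpa using hy
    · intro h; exact ⟨z + -a, h, by ring⟩
  rw [h1, measure_preimage_add_right]

lemma vol_gm_image (i : Fin d) (B : Set ℝ) :
    volume (gm n i '' B) = ENNReal.ofReal ((d:ℝ)⁻¹) * volume B := by
  have h1 : gm n i '' B = (fun y => (d:ℝ)⁻¹ * y) '' ((fun y => ((n i : ℝ)) + y) '' B) := by
    rw [Set.image_image]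
    apply Set.image_congr
    intro x _
    rw [gm]
    field_simp
    ring
  rw [h1, vol_smul_image _ (by positivity), vol_add_image]

lemma continuous_gm (i : Fin d) : Continuous (gm n i) := by
  apply Continuous.div_const
  exact continuous_id.add continuous_const

variable {K : Set ℝ}

lemma ennreal_d_mul_inv (hd : 2 ≤ d) : (d:ℝ≥0∞) * ENNReal.ofReal ((d:ℝ)⁻¹) = 1 := by
  rw [ENNReal.ofReal_inv_of_pos (dpos hd), ← ENNReal.ofReal_natCast d]
  exact ENNReal.mul_inv_cancel (ENNReal.ofReal_pos.2 (dpos hd)).ne'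
    ENNReal.ofReal_ne_top

lemma vol_overlap (hd : 2 ≤ d) (hc : IsCompact K) (hK : K = ⋃ i : Fin d, gm n i '' K)
    {i j : Fin d} (hij : i ≠ j) : volume (gm n i '' K ∩ gm n j '' K) = 0 := by
  classical
  set A : Fin d → Set ℝ := fun l => gm n l '' K with hA
  set V := volume K with hV
  set c := ENNReal.ofReal ((d:ℝ)⁻¹) * V with hc'
  have hAl : ∀ l, volume (A l) = c := fun l => vol_gm_image n l K
  have hVfin : V ≠ ⊤ := hc.measure_lt_top.ne
  have hcomp : ∀ l, IsCompact (A l) := fun l => hc.image (continuous_gm n l)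
  have hmeas : ∀ l, MeasurableSet (A l) := fun l => (hcomp l).isClosed.measurableSet
  set I := volume (A i ∩ A j) with hI
  set S : Finset (Fin d) := (Finset.univ.erase i).erase j with hS
  have hcard : S.card = d - 2 := by
    rw [hS, Finset.card_erase_of_mem (Finset.mem_erase.2 ⟨hij.symm, Finset.mem_univ j⟩),
      Finset.card_erase_of_mem (Finset.mem_univ i), Finset.card_univ, Fintype.card_fin]
    omega
  have hsub : (⋃ l, A l) ⊆ (A i ∪ A j) ∪ ⋃ l ∈ S, A l := by
    intro x hx
    obtain ⟨l, hl⟩ := mem_iUnion.1 hx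
    by_cases h1 : l = i
    · exact Or.inl (Or.inl (h1 ▸ hl))
    by_cases h2 : l = j
    · exact Or.inl (Or.inr (h2 ▸ hl))
    · exact Or.inr (mem_biUnion (Finset.mem_erase.2 ⟨h2, Finset.mem_erase.2 ⟨h1, Finset.mem_univ l⟩⟩) hl)
  have hdc : (d:ℝ≥0∞) * ENNReal.ofReal ((d:ℝ)⁻¹) = 1 := ennreal_d_mul_inv hd
  have hdcV : (d:ℝ≥0∞) * c = V := by
    rw [hc', ← mul_assoc, hdc, one_mul]
  have key : V + I ≤ V := by
    have h1 : V = volume (⋃ l, A l) := by rw [hV, hA]; exact congrArg volume hK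
    have h2 : volume (⋃ l, A l) ≤ volume (A i ∪ A j) + ∑ l ∈ S, volume (A l) :=
      le_trans (measure_mono hsub)
        (le_trans (measure_union_le _ _) (by
          gcongr
          exact measure_biUnion_finset_le S A))
    have h3 : volume (A i ∪ A j) + I = c + c := by
      rw [hI, measure_union_add_inter (A i) (hmeas j), hAl, hAl]
    have h4 : ∑ l ∈ S, volume (A l) = ((d - 2:ℕ):ℝ≥0∞) * c := by
      rw [Finset.sum_congr rfl (fun l _ => hAl l), Finset.sum_const, hcard, nsmul_eq_mul]
    calc V + I ≤ (volume (A i ∪ A j) + ∑ l ∈ S, volume (A l)) + I := by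
          rw [h1]; exact add_le_add_left h2 I
      _ = (volume (A i ∪ A j) + I) + ∑ l ∈ S, volume (A l) := by ring
      _ = (c + c) + ((d - 2:ℕ):ℝ≥0∞) * c := by rw [h3, h4]
      _ = ((2:ℝ≥0∞) + ((d - 2:ℕ):ℝ≥0∞)) * c := by ring
      _ = (d:ℝ≥0∞) * c := by
          congr 1
          have h5 : ((2:ℕ):ℝ≥0∞) + ((d - 2:ℕ):ℝ≥0∞) = ((d:ℕ):ℝ≥0∞) := by
            rw [← Nat.cast_add]
            congr 1
            omega
          simpa using h5
      _ = V := hdcV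
  have : I ≤ 0 := by
    apply ENNReal.le_of_add_le_add_left hVfin
    simpa using key
  simpa [hI] using le_antisymm this (zero_le)

lemma vol_Ov (hd : 2 ≤ d) (hc : IsCompact K) (hK : K = ⋃ i : Fin d, gm n i '' K) :
    volume (Ov n K) = 0 := by
  rw [Ov]
  apply measure_iUnion_null
  intro p
  apply measure_iUnion_null
  intro hp
  exact vol_overlap n hd hc hK hp

lemma vol_UU (hd : 2 ≤ d) (hc : IsCompact K) (hK : K = ⋃ i : Fin d, gm n i '' K) :
    volume (UU n K) = 0 := by
  rw [UU]
  apply measure_iUnion_null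
  intro k
  apply measure_iUnion_null
  intro w
  set c := ∑ j : Fin k, (n (w j) : ℝ) / (d:ℝ) ^ ((j:ℕ)+1)
  have h1 : (fun z : ℝ => c + z / (d:ℝ)^k) '' Ov n K
      = (fun z => c + z) '' ((fun z => ((d:ℝ)^k)⁻¹ * z) '' (Ov n K)) := by
    rw [Set.image_image]
    apply Set.image_congr
    intro x _
    rw [div_eq_inv_mul]
  rw [h1, vol_add_image, vol_smul_image _ (by positivity), vol_Ov n hd hc hK, mul_zero]

end vol



open MeasureTheory Set Filter Topology Pointwise
open scoped ENNReal Classical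


local instance fact01 : Fact ((0:ℝ) < 1) := ⟨one_pos⟩

variable {d : ℕ} (n : Fin d → ℤ)

/-- multiplicity function on ℝ -/
noncomputable def Phi (K : Set ℝ) : ℝ → ℝ≥0∞ :=
  fun t => ∑' z : ℤ, K.indicator 1 (t + z)

lemma measurable_Phi {K : Set ℝ} (hmK : MeasurableSet K) : Measurable (Phi K) := by
  apply Measurable.ennreal_tsum
  intro z
  exact (measurable_const.indicator hmK).comp (measurable_id.add_const _)

lemma Phi_add_int (K : Set ℝ) (t : ℝ) (z : ℤ) : Phi K (t + z) = Phi K t := by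
  have h0 := (Equiv.addLeft z).tsum_eq (fun j : ℤ => K.indicator (1 : ℝ → ℝ≥0∞) (t + j))
  rw [Phi, Phi, ← h0]
  apply tsum_congr
  intro j
  simp only [Equiv.coe_addLeft]
  congr 1
  push_cast
  ring

/-- multiplicity function on the circle -/
noncomputable def Phic (K : Set ℝ) : AddCircle (1:ℝ) → ℝ≥0∞ :=
  AddCircle.liftIoc 1 0 (Phi K)

lemma coe_int_zero (z : ℤ) : ((z:ℝ) : AddCircle (1:ℝ)) = 0 := by
  rw [AddCircle.coe_eq_zero_iff]
  exact ⟨z, by simp⟩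

lemma coe_add_int (t : ℝ) (z : ℤ) : ((t + z : ℝ) : AddCircle (1:ℝ)) = (t : AddCircle (1:ℝ)) := by
  have h1 : ((t + z : ℝ) : AddCircle (1:ℝ)) = (t : AddCircle (1:ℝ)) + ((z:ℝ) : AddCircle (1:ℝ)) := by
    norm_cast
  rw [h1, coe_int_zero, add_zero]

lemma Phic_coe (K : Set ℝ) (t : ℝ) : Phic K (t : AddCircle (1:ℝ)) = Phi K t := by
  set z : ℤ := ⌈t⌉ - 1 with hz
  set t' : ℝ := t - z with ht'
  have h1 : t' ∈ Ioc (0:ℝ) (0 + 1) := by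
    constructor
    · have := Int.ceil_lt_add_one t
      rw [ht', hz]
      push_cast
      linarith
    · have := Int.le_ceil t
      rw [ht', hz]
      push_cast
      linarith
  have h2 : (t' : AddCircle (1:ℝ)) = (t : AddCircle (1:ℝ)) := by
    have : t = t' + z := by rw [ht']; ring
    rw [this, coe_add_int]
  rw [← h2, Phic, AddCircle.liftIoc_coe_apply h1]
  have : t = t' + z := by rw [ht']; ring
  rw [this, Phi_add_int]

lemma measurable_Phic {K : Set ℝ} (hmK : MeasurableSet K) : Measurable (Phic K) := by
  have h1 : Phic K = (Phi K) ∘ (Subtype.val : Ioc (0:ℝ) (0+1) → ℝ)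
      ∘ (AddCircle.measurableEquivIoc 1 0) := rfl
  rw [h1]
  exact ((measurable_Phi hmK).comp measurable_subtype_coe).comp
    (AddCircle.measurableEquivIoc 1 0).measurable

/-- window -/
noncomputable def Jw (R : ℕ) : Finset ℤ := Finset.Icc (-(R+1) : ℤ) ((R+1) : ℤ)

lemma window {K : Set ℝ} {R : ℕ} (hRK : ∀ x ∈ K, |x| ≤ (R:ℝ)) {t : ℝ}
    (ht : t ∈ Icc (0:ℝ) 1) {z : ℤ} (hzK : t + z ∈ K) : z ∈ Jw R := by
  have h1 := abs_le.1 (hRK _ hzK)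
  rw [Jw, Finset.mem_Icc]
  constructor
  · have : ((-(R+1) : ℤ) : ℝ) ≤ (z:ℝ) := by push_cast; cases ht; linarith [h1.1]
    exact_mod_cast this
  · have : (z:ℝ) ≤ (((R+1) : ℤ) : ℝ) := by push_cast; cases ht; linarith [h1.2]
    exact_mod_cast this

lemma Phi_eq_card {K : Set ℝ} {R : ℕ} (hRK : ∀ x ∈ K, |x| ≤ (R:ℝ)) {t : ℝ}
    (ht : t ∈ Icc (0:ℝ) 1) :
    Phi K t = (((Jw R).filter (fun z : ℤ => t + (z:ℝ) ∈ K)).card : ℝ≥0∞) := by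
  classical
  rw [Phi, tsum_eq_sum (s := Jw R) (fun z hz => by
    apply indicator_of_notMem
    intro hmem
    exact hz (window hRK ht hmem))]
  have h1 : ∀ z ∈ Jw R, K.indicator (1 : ℝ → ℝ≥0∞) (t + z)
      = if t + (z:ℝ) ∈ K then 1 else 0 := fun z _ => indicator_apply K 1 _
  rw [Finset.sum_congr rfl h1, Finset.sum_ite, Finset.sum_const, Finset.sum_const_zero,
    add_zero, nsmul_eq_mul, mul_one]

/-- the pushforward of Lebesgue measure on K to the circle -/
noncomputable def nu (K : Set ℝ) : Measure (AddCircle (1:ℝ)) :=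
  Measure.map ((↑) : ℝ → AddCircle (1:ℝ)) (volume.restrict K)

lemma measurable_mk1 : Measurable ((↑) : ℝ → AddCircle (1:ℝ)) :=
  AddCircle.measurable_mk'

lemma nu_apply {K : Set ℝ} (hmK : MeasurableSet K) {A : Set (AddCircle (1:ℝ))}
    (hA : MeasurableSet A) :
    nu K A = volume ((((↑) : ℝ → AddCircle (1:ℝ)) ⁻¹' A) ∩ K) := by
  rw [nu, Measure.map_apply measurable_mk1 hA, Measure.restrict_apply (measurable_mk1 hA)]

lemma iUnion_Ioc_int : (⋃ z : ℤ, Ioc (z:ℝ) ((z:ℝ)+1)) = univ := by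
  ext x
  simp only [mem_iUnion, mem_univ, iff_true, mem_Ioc]
  refine ⟨⌈x⌉ - 1, ?_, ?_⟩
  · have := Int.ceil_lt_add_one x
    push_cast
    linarith
  · have := Int.le_ceil x
    push_cast
    linarith

lemma pairwise_Ioc : Pairwise (Function.onFun Disjoint (fun z : ℤ => Ioc (z:ℝ) ((z:ℝ)+1))) := by
  intro z z' hne
  rw [Function.onFun, Set.disjoint_left]
  intro x hx hx'
  apply hne
  have h1 : (z:ℝ) < (z':ℝ) + 1 := lt_of_lt_of_le hx.1 hx'.2
  have h2 : (z':ℝ) < (z:ℝ) + 1 := lt_of_lt_of_le hx'.1 hx.2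
  have h1' : z < z' + 1 := by exact_mod_cast h1
  have h2' : z' < z + 1 := by exact_mod_cast h2
  omega

lemma preimage_mk_periodic {A : Set (AddCircle (1:ℝ))} (t : ℝ) (z : ℤ) :
    t + (z:ℝ) ∈ (((↑) : ℝ → AddCircle (1:ℝ)) ⁻¹' A) ↔ t ∈ (((↑) : ℝ → AddCircle (1:ℝ)) ⁻¹' A) := by
  simp only [mem_preimage]
  rw [coe_add_int]

lemma nu_eq_withDensity {K : Set ℝ} (hmK : MeasurableSet K) :
    nu K = volume.withDensity (Phic K) := by
  ext A hA
  rw [nu_apply hmK hA, withDensity_apply _ hA]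
  set S : Set ℝ := (((↑) : ℝ → AddCircle (1:ℝ)) ⁻¹' A) with hS
  have hmS : MeasurableSet S := measurable_mk1 hA
  -- step 1 : transfer to the fundamental domain
  have hvol : (volume : Measure (AddCircle (1:ℝ)))
      = Measure.map ((↑) : ℝ → AddCircle (1:ℝ)) (volume.restrict (Ioc (0:ℝ) (0+1))) :=
    (AddCircle.measurePreserving_mk 1 0).map_eq.symm
  have hstep1 : ∫⁻ a in A, Phic K a ∂volume
      = ∫⁻ t in Ioc (0:ℝ) (0+1), S.indicator (Phi K) t ∂volume := by
    rw [← lintegral_indicator hA, hvol,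
      lintegral_map ((measurable_Phic hmK).indicator hA) measurable_mk1]
    apply lintegral_congr
    intro t
    by_cases h : (t : AddCircle (1:ℝ)) ∈ A
    · have htS : t ∈ S := h
      simp [indicator_apply, h, htS, Phic_coe K t]
    · have htS : t ∉ S := h
      simp [indicator_apply, h, htS]

  -- step 2: expand indicator and swap sum/integral
  have hexp : ∀ t : ℝ, S.indicator (Phi K) t
      = ∑' z : ℤ, ((S ∩ (fun u : ℝ => u + (z:ℝ)) ⁻¹' K).indicator (1 : ℝ → ℝ≥0∞) t) := by
    intro t
    by_cases h : t ∈ S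
    · rw [indicator_of_mem h, Phi]
      apply tsum_congr
      intro z
      by_cases h2 : t + (z:ℝ) ∈ K
      · simp [indicator_apply, h, h2]
      · simp [indicator_apply, h, h2]
    · rw [indicator_of_notMem h]
      symm
      have : ∀ z : ℤ, ((S ∩ (fun u : ℝ => u + (z:ℝ)) ⁻¹' K).indicator (1 : ℝ → ℝ≥0∞) t) = 0 := by
        intro z
        simp [indicator_apply, h]
      rw [tsum_congr this, tsum_zero]
  have hmz : ∀ z : ℤ, MeasurableSet (S ∩ (fun u : ℝ => u + (z:ℝ)) ⁻¹' K) :=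
    fun z => hmS.inter (hmK.preimage (measurable_id.add_const _))
  have hstep2 : ∫⁻ t in Ioc (0:ℝ) (0+1), S.indicator (Phi K) t ∂volume
      = ∑' z : ℤ, volume ((S ∩ (fun u : ℝ => u + (z:ℝ)) ⁻¹' K) ∩ Ioc (0:ℝ) (0+1)) := by
    calc ∫⁻ t in Ioc (0:ℝ) (0+1), S.indicator (Phi K) t ∂volume
        = ∫⁻ t in Ioc (0:ℝ) (0+1),
            ∑' z : ℤ, ((S ∩ (fun u : ℝ => u + (z:ℝ)) ⁻¹' K).indicator (1:ℝ→ℝ≥0∞) t) ∂volume :=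
          lintegral_congr hexp
      _ = ∑' z : ℤ, ∫⁻ t in Ioc (0:ℝ) (0+1),
            ((S ∩ (fun u : ℝ => u + (z:ℝ)) ⁻¹' K).indicator (1:ℝ→ℝ≥0∞) t) ∂volume :=
          lintegral_tsum (fun z => (measurable_const.indicator (hmz z)).aemeasurable)
      _ = ∑' z : ℤ, volume ((S ∩ (fun u : ℝ => u + (z:ℝ)) ⁻¹' K) ∩ Ioc (0:ℝ) (0+1)) := by
          apply tsum_congr
          intro z
          rw [lintegral_indicator_one (hmz z), Measure.restrict_apply (hmz z)]
  have hstep3 : ∀ z : ℤ, (S ∩ (fun u:ℝ => u + (z:ℝ)) ⁻¹' K) ∩ Ioc (0:ℝ) (0+1)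
      = (fun u:ℝ => u + (z:ℝ)) ⁻¹' (S ∩ K ∩ Ioc ((z:ℝ)) ((z:ℝ)+1)) := by
    intro z
    ext u
    simp only [mem_inter_iff, mem_preimage, mem_Ioc]
    constructor
    · rintro ⟨⟨hu1, hu2⟩, hu3, hu4⟩
      exact ⟨⟨(preimage_mk_periodic u z).2 hu1, hu2⟩, by linarith, by linarith⟩
    · rintro ⟨⟨hu1, hu2⟩, hu3, hu4⟩
      exact ⟨⟨(preimage_mk_periodic u z).1 hu1, hu2⟩, by linarith, by linarith⟩
  have hstep4 : ∑' z : ℤ, volume (S ∩ K ∩ Ioc ((z:ℝ)) ((z:ℝ)+1)) = volume (S ∩ K) := by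
    rw [← measure_iUnion
      (fun z z' hne => Disjoint.mono inter_subset_right inter_subset_right (pairwise_Ioc hne))
      (fun z => (hmS.inter hmK).inter measurableSet_Ioc)]
    · congr 1
      rw [← inter_iUnion, iUnion_Ioc_int, inter_univ]
  have final : ∫⁻ a in A, Phic K a ∂volume = volume (S ∩ K) := by
    rw [hstep1, hstep2]
    calc ∑' z : ℤ, volume ((S ∩ (fun u : ℝ => u + (z:ℝ)) ⁻¹' K) ∩ Ioc (0:ℝ) (0+1))
        = ∑' z : ℤ, volume (S ∩ K ∩ Ioc ((z:ℝ)) ((z:ℝ)+1)) := by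
          apply tsum_congr
          intro z
          rw [hstep3 z, measure_preimage_add_right]
      _ = volume (S ∩ K) := hstep4
  rw [final]

/-- the times-d map on the circle -/
noncomputable def Td (d : ℕ) : AddCircle (1:ℝ) → AddCircle (1:ℝ) := fun a => (d:ℤ) • a

lemma Td_coe (t : ℝ) : Td d (t : AddCircle (1:ℝ)) = (((d:ℝ) * t : ℝ) : AddCircle (1:ℝ)) := by
  rw [Td, ← AddCircle.coe_zsmul]
  congr 1
  rw [zsmul_eq_mul]
  push_cast
  ring

lemma measurable_Td : Measurable (Td d) := by
  apply Continuous.measurable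
  exact continuous_zsmul (d:ℤ)

lemma ergodic_Td (hd : 2 ≤ d) : Ergodic (Td d) (volume : Measure (AddCircle (1:ℝ))) := by
  apply AddCircle.ergodic_zsmul
  have : (1:ℤ) < (d:ℤ) := by exact_mod_cast (by omega : 1 < d)
  rw [abs_of_nonneg (by positivity : (0:ℤ) ≤ (d:ℤ))]
  exact this

variable {K : Set ℝ}

lemma nu_invariant (hd : 2 ≤ d) (hc : IsCompact K)
    (hK : K = ⋃ i : Fin d, gm n i '' K) {A : Set (AddCircle (1:ℝ))} (hA : MeasurableSet A) :
    nu K (Td d ⁻¹' A) = nu K A := by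
  have hmK : MeasurableSet K := hc.isClosed.measurableSet
  have hd0 := dpos hd
  set S : Set ℝ := (((↑) : ℝ → AddCircle (1:ℝ)) ⁻¹' A) with hS
  have hmS : MeasurableSet S := measurable_mk1 hA
  set W : Set ℝ := (fun t : ℝ => (d:ℝ) * t) ⁻¹' S with hW
  have hmW : MeasurableSet W := hmS.preimage (measurable_const_mul _)
  have hpre : (((↑) : ℝ → AddCircle (1:ℝ)) ⁻¹' (Td d ⁻¹' A)) = W := by
    ext t
    simp only [mem_preimage, hW, hS]
    rw [Td_coe]
  have h1 : nu K (Td d ⁻¹' A) = volume (W ∩ K) := by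
    rw [nu_apply hmK (measurable_Td hA), hpre]
  have h2 : W ∩ K = ⋃ i : Fin d, (gm n i '' K ∩ W) := by
    conv_lhs => rw [inter_comm, hK]
    rw [iUnion_inter]
  have h3 : ∀ i : Fin d, gm n i ⁻¹' W = S := by
    intro i
    ext y
    simp only [mem_preimage, gm, hW, hS]
    rw [mul_div_cancel₀ _ (ne_of_gt hd0)]
    exact preimage_mk_periodic y (n i)
  have h4 : ∀ i : Fin d, gm n i '' K ∩ W = gm n i '' (K ∩ S) := by
    intro i
    rw [← image_inter_preimage (gm n i) K W, h3]
  have h5 : volume (W ∩ K) = ∑' i : Fin d, volume (gm n i '' K ∩ W) := by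
    rw [h2]
    apply measure_iUnion₀
    · intro i j hij
      show volume ((gm n i '' K ∩ W) ∩ (gm n j '' K ∩ W)) = 0
      apply measure_mono_null _ (vol_overlap n hd hc hK hij)
      intro x hx
      exact ⟨hx.1.1, hx.2.1⟩
    · intro i
      exact (((hc.image (continuous_gm n i)).isClosed.measurableSet).inter hmW).nullMeasurableSet
  have h6 : volume (W ∩ K) = (d:ℝ≥0∞) * (ENNReal.ofReal ((d:ℝ)⁻¹) * volume (K ∩ S)) := by
    rw [h5]
    have : ∀ i : Fin d, volume (gm n i '' K ∩ W) = ENNReal.ofReal ((d:ℝ)⁻¹) * volume (K ∩ S) := by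
      intro i
      rw [h4 i, vol_gm_image]
    rw [tsum_congr this, tsum_fintype, Finset.sum_const, Finset.card_univ, Fintype.card_fin,
      nsmul_eq_mul]
  rw [h1, h6, ← mul_assoc, ennreal_d_mul_inv hd, one_mul, nu_apply hmK hA, inter_comm]

lemma exists_m (hd : 2 ≤ d) (hne : K.Nonempty) (hc : IsCompact K)
    (hK : K = ⋃ i : Fin d, gm n i '' K) {R : ℕ} (hRK : ∀ x ∈ K, |x| ≤ (R:ℝ)) :
    ∃ m : ℕ, volume K = (m : ℝ≥0∞) ∧
      (∀ᵐ t ∂(volume.restrict (Ioc (0:ℝ) (0+1))), Phi K t = (m : ℝ≥0∞)) := by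
  classical
  have hmK : MeasurableSet K := hc.isClosed.measurableSet
  set cardJ := (Jw R).card with hcardJ
  -- every value of Phic is a small natural number
  have hval : ∀ a : AddCircle (1:ℝ), ∃ c : ℕ, c ≤ cardJ ∧ Phic K a = (c:ℝ≥0∞) := by
    intro a
    set t : ℝ := ((AddCircle.equivIoc 1 0 a : ℝ)) with ht
    have htIoc : t ∈ Ioc (0:ℝ) (0+1) := (AddCircle.equivIoc 1 0 a).2
    have htIcc : t ∈ Icc (0:ℝ) 1 := by
      rw [zero_add] at htIoc
      exact ⟨le_of_lt htIoc.1, htIoc.2⟩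
    have h1 : Phic K a = Phi K t := rfl
    refine ⟨((Jw R).filter (fun z : ℤ => t + (z:ℝ) ∈ K)).card, Finset.card_filter_le _ _, ?_⟩
    rw [h1, Phi_eq_card hRK htIcc]
  set Acc : ℕ → Set (AddCircle (1:ℝ)) := fun c => Phic K ⁻¹' {(c:ℝ≥0∞)} with hAcc
  have hmAcc : ∀ c, MeasurableSet (Acc c) :=
    fun c => (measurable_Phic hmK) (measurableSet_singleton _)
  set P : Finset ℕ := (Finset.range (cardJ+1)).filter (fun c => volume (Acc c) ≠ 0) with hP
  have hPne : P.Nonempty := by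
    by_contra hemp
    rw [Finset.not_nonempty_iff_eq_empty] at hemp
    have hnull : ∀ c ∈ Finset.range (cardJ+1), volume (Acc c) = 0 := by
      intro c hc'
      by_contra h0
      have : c ∈ P := Finset.mem_filter.2 ⟨hc', h0⟩
      rw [hemp] at this
      exact absurd this (Finset.notMem_empty c)
    have hcover : (univ : Set (AddCircle (1:ℝ))) ⊆ ⋃ c ∈ Finset.range (cardJ+1), Acc c := by
      intro a _
      obtain ⟨c, hc1, hc2⟩ := hval a
      exact mem_biUnion (Finset.mem_range.2 (by omega)) hc2
    have : volume (univ : Set (AddCircle (1:ℝ))) = 0 := by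
      apply measure_mono_null hcover
      exact (measure_biUnion_null_iff (Finset.range (cardJ+1)).countable_toSet).2
        (fun c hc' => hnull c hc')
    rw [AddCircle.measure_univ] at this
    simp at this
  set m : ℕ := P.max' hPne with hm
  have hmP : m ∈ P := P.max'_mem hPne
  have hm_pos : volume (Acc m) ≠ 0 := (Finset.mem_filter.1 hmP).2
  have hle_ae : ∀ᵐ a ∂(volume : Measure (AddCircle (1:ℝ))), Phic K a ≤ (m:ℝ≥0∞) := by
    rw [ae_iff]
    apply measure_mono_null
      (t := ⋃ c ∈ (Finset.range (cardJ+1)).filter (fun c => m < c), Acc c)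
    · intro a ha
      simp only [mem_setOf_eq, not_le] at ha
      obtain ⟨c, hc1, hc2⟩ := hval a
      have hcm : m < c := by
        by_contra hcm
        push_neg at hcm
        apply absurd ha
        rw [hc2]
        simp only [not_lt]
        exact_mod_cast hcm
      exact mem_biUnion (Finset.mem_filter.2 ⟨Finset.mem_range.2 (by omega), hcm⟩) hc2
    · apply (measure_biUnion_null_iff ((Finset.range (cardJ+1)).filter _).countable_toSet).2
      intro c hc'
      rw [Finset.mem_coe, Finset.mem_filter] at hc'
      by_contra h0
      have : c ∈ P := Finset.mem_filter.2 ⟨hc'.1, h0⟩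
      have := P.le_max' c this
      omega
  have hTd := ergodic_Td hd
  set A : Set (AddCircle (1:ℝ)) := Acc m with hA
  have hAmeas : MeasurableSet A := hmAcc m
  have hwd := nu_eq_withDensity (K := K) hmK
  have hnuA : ∀ {B : Set (AddCircle (1:ℝ))}, MeasurableSet B → nu K B = ∫⁻ a in B, Phic K a := by
    intro B hB
    rw [hwd, withDensity_apply _ hB]
  set D : Set (AddCircle (1:ℝ)) := Td d ⁻¹' A with hD
  have hDmeas : MeasurableSet D := measurable_Td hAmeas
  have hinv : nu K D = nu K A := nu_invariant n hd hc hK hAmeas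
  have hvolD : volume D = volume A :=
    hTd.toMeasurePreserving.measure_preimage hAmeas.nullMeasurableSet
  have hIA : ∫⁻ a in A, Phic K a ∂volume = (m:ℝ≥0∞) * volume A := by
    rw [setLIntegral_congr_fun hAmeas (fun a ha => ha),
      setLIntegral_const]
  -- split D
  set B1 : Set (AddCircle (1:ℝ)) := D ∩ {a | Phic K a ≠ (m:ℝ≥0∞)} with hB1
  set B2 : Set (AddCircle (1:ℝ)) := D ∩ {a | Phic K a = (m:ℝ≥0∞)} with hB2
  have hmB1 : MeasurableSet B1 :=
    hDmeas.inter ((measurable_Phic hmK) (measurableSet_singleton _)).compl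
  have hmB2 : MeasurableSet B2 := hDmeas.inter ((measurable_Phic hmK) (measurableSet_singleton _))
  have hDsplit : D = B1 ∪ B2 := by
    rw [hB1, hB2, ← inter_union_distrib_left]
    have : {a : AddCircle (1:ℝ) | Phic K a ≠ (m:ℝ≥0∞)} ∪ {a | Phic K a = (m:ℝ≥0∞)} = univ := by
      ext a; by_cases h : Phic K a = (m:ℝ≥0∞) <;> simp [h]
    rw [this, inter_univ]
  have hvolsplit : volume B1 + volume B2 = volume D := by
    rw [hDsplit, measure_union _ hmB2]
    rw [hB1, hB2]
    apply Set.disjoint_left.2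
    rintro a ⟨_, ha1⟩ ⟨_, ha2⟩
    exact ha1 ha2
  have hB1null : volume B1 = 0 := by
    rcases Nat.eq_zero_or_pos m with hm0 | hm1
    · -- m = 0 : a.e. Phic = 0, B1 ⊆ complement
      have hsub : B1 ⊆ {a | ¬ Phic K a ≤ (m:ℝ≥0∞)} := by
        intro a ha
        rw [hB1] at ha
        simp only [mem_setOf_eq]
        intro hle
        apply ha.2
        rw [hm0] at hle ⊢
        simpa using hle
      exact measure_mono_null hsub ((ae_iff).1 hle_ae)
    · -- m ≥ 1
      have hIsplit : ∫⁻ a in D, Phic K a ∂volume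
          = ∫⁻ a in B1, Phic K a ∂volume + ∫⁻ a in B2, Phic K a ∂volume := by
        rw [hDsplit]
        apply lintegral_union hmB2
        rw [hB1, hB2]
        apply Set.disjoint_left.2
        rintro a ⟨_, ha1⟩ ⟨_, ha2⟩
        exact ha1 ha2
      have hI2 : ∫⁻ a in B2, Phic K a ∂volume = (m:ℝ≥0∞) * volume B2 := by
        rw [setLIntegral_congr_fun hmB2 (fun a ha => ha.2),
          setLIntegral_const]
      have hI1 : ∫⁻ a in B1, Phic K a ∂volume ≤ ((m-1:ℕ):ℝ≥0∞) * volume B1 := by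
        have hae : ∀ᵐ a ∂(volume.restrict B1), Phic K a ≤ ((m-1:ℕ):ℝ≥0∞) := by
          have h1 := ae_restrict_of_ae (μ := volume) (s := B1) hle_ae
          have h2 := ae_restrict_mem (μ := (volume : Measure (AddCircle (1:ℝ)))) hmB1
          filter_upwards [h1, h2] with a ha1 ha2
          obtain ⟨c, hc1, hc2⟩ := hval a
          rw [hc2] at ha1 ⊢
          have hcm : c ≤ m := by exact_mod_cast ha1
          have hcne : c ≠ m := by
            intro hceq
            apply ha2.2
            rw [hc2, hceq]
          have : c ≤ m - 1 := by omega
          exact_mod_cast this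
        calc ∫⁻ a in B1, Phic K a ∂volume ≤ ∫⁻ _ in B1, ((m-1:ℕ):ℝ≥0∞) ∂volume :=
              lintegral_mono_ae hae
          _ = ((m-1:ℕ):ℝ≥0∞) * volume B1 := setLIntegral_const _ _
      -- main inequality
      have hfin : ((m:ℝ≥0∞) * volume A) ≠ ⊤ := by
        apply ENNReal.mul_ne_top (ENNReal.natCast_ne_top m)
        exact (measure_lt_top _ _).ne
      have hmain : (m:ℝ≥0∞) * volume A + volume B1 ≤ (m:ℝ≥0∞) * volume A := by
        calc (m:ℝ≥0∞) * volume A + volume B1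
            = ∫⁻ a in D, Phic K a ∂volume + volume B1 := by
              rw [← hIA, ← hnuA hAmeas, ← hinv, hnuA hDmeas]
          _ = (∫⁻ a in B1, Phic K a ∂volume + ∫⁻ a in B2, Phic K a ∂volume) + volume B1 := by
              rw [hIsplit]
          _ ≤ (((m-1:ℕ):ℝ≥0∞) * volume B1 + (m:ℝ≥0∞) * volume B2) + volume B1 := by
              gcongr
              rw [hI2]
          _ = (((m-1:ℕ):ℝ≥0∞) + 1) * volume B1 + (m:ℝ≥0∞) * volume B2 := by ring
          _ = (m:ℝ≥0∞) * volume B1 + (m:ℝ≥0∞) * volume B2 := by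
              have hcast : ((m-1:ℕ):ℝ≥0∞) + 1 = (m:ℝ≥0∞) := by
                norm_cast
                omega
              rw [hcast]
          _ = (m:ℝ≥0∞) * (volume B1 + volume B2) := by ring
          _ = (m:ℝ≥0∞) * volume D := by rw [hvolsplit]
          _ = (m:ℝ≥0∞) * volume A := by rw [hvolD]
      have hmain2 : (m:ℝ≥0∞) * volume A + volume B1 ≤ (m:ℝ≥0∞) * volume A + 0 := by
        rw [add_zero]
        exact hmain
      have := ENNReal.le_of_add_le_add_left hfin hmain2
      simpa using this
  -- D =ᵐ A
  have hDA : D =ᵐ[volume] A := by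
    rw [MeasureTheory.ae_eq_set]
    constructor
    · apply measure_mono_null (t := B1) _ hB1null
      intro a ha
      exact ⟨ha.1, fun heq => ha.2 heq⟩
    · have e1 : volume (A ∩ D) + volume (A \ D) = volume A := measure_inter_add_diff A hDmeas
      have e2 : volume (D ∩ A) + volume (D \ A) = volume D := measure_inter_add_diff D hAmeas
      have e3 : volume (D \ A) = 0 := by
        apply measure_mono_null (t := B1) _ hB1null
        intro a ha
        exact ⟨ha.1, fun heq => ha.2 heq⟩
      rw [e3, add_zero, inter_comm] at e2
      rw [← hvolD, ← e2] at e1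
      have hfin2 : volume (A ∩ D) ≠ ⊤ := (measure_lt_top _ _).ne
      have hle : volume (A ∩ D) + volume (A \ D) ≤ volume (A ∩ D) + 0 := by
        rw [add_zero]
        exact le_of_eq e1
      simpa using ENNReal.le_of_add_le_add_left hfin2 hle
  have hor := hTd.quasiErgodic.ae_empty_or_univ₀ hAmeas.nullMeasurableSet hDA
  rcases hor with hor | hor
  · exfalso
    apply hm_pos
    simpa using measure_congr hor
  · have hconull : ∀ᵐ a ∂(volume : Measure (AddCircle (1:ℝ))), Phic K a = (m:ℝ≥0∞) := by
      have hcompl : volume Aᶜ = 0 := (MeasureTheory.ae_eq_univ).1 hor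
      rw [ae_iff]
      apply measure_mono_null _ hcompl
      intro a ha hmem
      exact ha hmem
    refine ⟨m, ?_, ?_⟩
    · have h1 : volume K = nu K univ := by
        rw [nu_apply hmK MeasurableSet.univ, preimage_univ, univ_inter]
      rw [h1, hnuA MeasurableSet.univ, Measure.restrict_univ]
      calc ∫⁻ a, Phic K a ∂volume = ∫⁻ _, (m:ℝ≥0∞) ∂(volume : Measure (AddCircle (1:ℝ))) :=
            lintegral_congr_ae hconull
        _ = (m:ℝ≥0∞) * volume univ := by rw [lintegral_const]
        _ = (m:ℝ≥0∞) := by rw [AddCircle.measure_univ, ENNReal.ofReal_one, mul_one]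
    · have hmk := AddCircle.measurePreserving_mk (1:ℝ) 0
      have htend : Filter.Tendsto ((↑) : ℝ → AddCircle (1:ℝ))
          (ae (volume.restrict (Ioc (0:ℝ) (0+1)))) (ae (volume : Measure (AddCircle (1:ℝ)))) := by
        rw [← hmk.map_eq]
        exact MeasureTheory.Measure.tendsto_ae_map measurable_mk1.aemeasurable
      have hev := htend.eventually hconull
      filter_upwards [hev] with t ht
      rw [← Phic_coe K t]
      exact ht



open MeasureTheory Set Filter Topology Pointwise
open scoped ENNReal Classical


variable {d : ℕ} (n : Fin d → ℤ) {K : Set ℝ}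

lemma exists_cfun (hd : 2 ≤ d) (hc : IsCompact K) (hK : K = ⋃ i : Fin d, gm n i '' K) :
    ∃ cf : ℝ → (ℕ → Fin d), ∀ x ∈ K, F n (cf x) = x := by
  classical
  have h : ∀ x : ℝ, ∃ ω : ℕ → Fin d, x ∈ K → F n ω = x := by
    intro x
    by_cases hx : x ∈ K
    · obtain ⟨ω, hω⟩ := exists_coding n hd hc hK hx
      exact ⟨ω, fun _ => hω⟩
    · exact ⟨fun _ => ⟨0, by omega⟩, fun h => absurd h hx⟩
  choose cf hcf using h
  exact ⟨cf, fun x hx => hcf x hx⟩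

lemma fib_ge (hd : 2 ≤ d) (hne : K.Nonempty) (hc : IsCompact K)
    (hK : K = ⋃ i : Fin d, gm n i '' K)
    (cf : ℝ → (ℕ → Fin d)) (hcf : ∀ x ∈ K, F n (cf x) = x) (t : ℝ) :
    {z : ℤ | t + (z:ℝ) ∈ K}.encard ≤ {ω : ℕ → Fin d | e (F n ω) = e t}.encard := by
  set Js : Set ℤ := {z : ℤ | t + (z:ℝ) ∈ K} with hJs
  set ζ : ℤ → (ℕ → Fin d) := fun z => cf (t + (z:ℝ)) with hζ
  have hinj : InjOn ζ Js := by
    intro z hz z' hz' heq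
    have h1 : F n (ζ z) = t + (z:ℝ) := hcf _ hz
    have h2 : F n (ζ z') = t + (z':ℝ) := hcf _ hz'
    rw [heq, h2] at h1
    have : (z':ℝ) = (z:ℝ) := by linarith
    exact_mod_cast this.symm
  have hsub : ζ '' Js ⊆ {ω : ℕ → Fin d | e (F n ω) = e t} := by
    rintro ω ⟨z, hz, rfl⟩
    show e (F n (ζ z)) = e t
    rw [hcf _ hz, e_add_int]
  calc Js.encard = (ζ '' Js).encard := (hinj.encard_image).symm
    _ ≤ _ := encard_le_encard hsub

lemma fib_eq (hd : 2 ≤ d) (hne : K.Nonempty) (hc : IsCompact K)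
    (hK : K = ⋃ i : Fin d, gm n i '' K) {R : ℕ} (hRK : ∀ x ∈ K, |x| ≤ (R:ℝ))
    (cf : ℝ → (ℕ → Fin d)) (hcf : ∀ x ∈ K, F n (cf x) = x)
    {t : ℝ} (ht : t ∈ Icc (0:ℝ) 1) (hU : ∀ z : ℤ, t + (z:ℝ) ∉ UU n K) :
    {ω : ℕ → Fin d | e (F n ω) = e t}.encard
      = ((((Jw R).filter (fun z : ℤ => t + (z:ℝ) ∈ K))).card : ℕ∞) := by
  classical
  set Js : Set ℤ := {z : ℤ | t + (z:ℝ) ∈ K} with hJs'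
  have hJs : Js = (((Jw R).filter (fun z : ℤ => t + (z:ℝ) ∈ K)) : Finset ℤ) := by
    ext z
    simp only [hJs', mem_setOf_eq, Finset.coe_filter, mem_setOf_eq]
    exact ⟨fun h => ⟨window hRK ht h, h⟩, fun h => h.2⟩
  set ζ : ℤ → (ℕ → Fin d) := fun z => cf (t + (z:ℝ)) with hζ
  have hinj : InjOn ζ Js := by
    intro z hz z' hz' heq
    have h1 : F n (ζ z) = t + (z:ℝ) := hcf _ hz
    have h2 : F n (ζ z') = t + (z':ℝ) := hcf _ hz'
    rw [heq, h2] at h1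
    have : (z':ℝ) = (z:ℝ) := by linarith
    exact_mod_cast this.symm
  have himg : {ω : ℕ → Fin d | e (F n ω) = e t} = ζ '' Js := by
    ext ω
    simp only [mem_setOf_eq, mem_image]
    constructor
    · intro hω
      obtain ⟨z, hz⟩ := e_eq_iff.1 hω
      have hFK : F n ω ∈ K := F_mem n hd hne hc hK ω
      have hzK : t + (z:ℝ) ∈ K := by rw [← hz]; exact hFK
      refine ⟨z, hzK, ?_⟩
      have hcz : F n (ζ z) = t + (z:ℝ) := hcf _ hzK
      by_contra hne'
      have hFF : F n (ζ z) = F n ω := by rw [hcz, hz]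
      have := double_coding_mem n hd hne hc hK (fun h => hne' h) hFF
      rw [hcz] at this
      exact hU z this
    · rintro ⟨z, hzK, rfl⟩
      show e (F n (ζ z)) = e t
      rw [hcf _ hzK, e_add_int]
  rw [himg, hinj.encard_image, hJs, encard_coe_eq_coe_finsetCard]

lemma lower_bound (hc : IsCompact K) {R : ℕ} (hRK : ∀ x ∈ K, |x| ≤ (R:ℝ)) {m : ℕ}
    (hae : ∀ᵐ u ∂(volume.restrict (Ioc (0:ℝ) (0+1))), Phi K u = (m:ℝ≥0∞))
    {t : ℝ} (ht : t ∈ Icc (0:ℝ) 1) :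
    (m : ℕ∞) ≤ {z : ℤ | t + (z:ℝ) ∈ K}.encard := by
  classical
  have hmK : MeasurableSet K := hc.isClosed.measurableSet
  have hBadnull : volume ({u : ℝ | Phi K u ≠ (m:ℝ≥0∞)} ∩ Ioc (0:ℝ) (0+1)) = 0 := by
    have h1 : (volume.restrict (Ioc (0:ℝ) (0+1))) {u : ℝ | Phi K u ≠ (m:ℝ≥0∞)} = 0 :=
      (ae_iff).1 hae
    have hms : MeasurableSet {u : ℝ | Phi K u ≠ (m:ℝ≥0∞)} := by
      have heq : {u : ℝ | Phi K u ≠ (m:ℝ≥0∞)} = (Phi K ⁻¹' {(m:ℝ≥0∞)})ᶜ := rfl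
      rw [heq]
      exact (measurable_Phi hmK (measurableSet_singleton _)).compl
    rwa [Measure.restrict_apply hms] at h1
  -- pick good points near t
  have hpick : ∀ k : ℕ, ∃ u, u ∈ Ioc (0:ℝ) 1 ∧ |u - t| < 1/(k+1) ∧ Phi K u = (m:ℝ≥0∞) := by
    intro k
    set ε : ℝ := 1/(k+1) with hε
    have hεpos : 0 < ε := by positivity
    set a : ℝ := max (t - ε) 0 with ha
    set b : ℝ := min (t + ε) 1 with hb
    have hab : a < b := by
      apply max_lt
      · apply lt_min (by linarith) (by linarith [ht.2])
      · apply lt_min (by linarith [ht.1]) one_pos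
    have hsub : Ioo a b ⊆ Ioc (0:ℝ) 1 := by
      intro x hx
      constructor
      · exact lt_of_le_of_lt (le_max_right _ _) hx.1
      · exact le_of_lt (lt_of_lt_of_le hx.2 (min_le_right _ _))
    have hvol : volume (Ioo a b) ≠ 0 := by
      rw [Real.volume_Ioo]
      simp only [ne_eq, ENNReal.ofReal_eq_zero, not_le]
      linarith
    have hns : ¬ (Ioo a b ⊆ {u : ℝ | Phi K u ≠ (m:ℝ≥0∞)} ∩ Ioc (0:ℝ) (0+1)) := by
      intro hcon
      exact hvol (measure_mono_null hcon hBadnull)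
    rw [Set.not_subset] at hns
    obtain ⟨u, hu1, hu2⟩ := hns
    refine ⟨u, hsub hu1, ?_, ?_⟩
    · rw [abs_sub_lt_iff]
      have h1' : a ≥ t - ε := le_max_left _ _
      have h2' : b ≤ t + ε := min_le_left _ _
      have h3' := hu1.1
      have h4' := hu1.2
      constructor <;> linarith
    · by_contra hne'
      apply hu2
      constructor
      · exact hne'
      · rw [zero_add]
        exact hsub hu1
  choose u hu using hpick
  set Sk : ℕ → Finset ℤ := fun k => (Jw R).filter (fun z : ℤ => u k + (z:ℝ) ∈ K) with hSk
  have hcard : ∀ k, (Sk k).card = m := by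
    intro k
    have h1 : u k ∈ Icc (0:ℝ) 1 := ⟨le_of_lt (hu k).1.1, (hu k).1.2⟩
    have h2 := Phi_eq_card hRK h1
    rw [(hu k).2.2] at h2
    exact_mod_cast h2.symm
  set map : ℕ → {S // S ∈ (Jw R).powerset} :=
    fun k => ⟨Sk k, Finset.mem_powerset.2 (Finset.filter_subset _ _)⟩ with hmap
  obtain ⟨y, hy⟩ := Finite.exists_infinite_fiber map
  have hyinf : (map ⁻¹' {y}).Infinite := Set.infinite_coe_iff.1 hy
  have hSy : ∀ k ∈ map ⁻¹' {y}, Sk k = y.1 := by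
    intro k hk
    have : map k = y := hk
    rw [← this]
  have hKmem : ∀ z ∈ y.1, t + (z:ℝ) ∈ K := by
    intro z hz
    have hclosure : t + (z:ℝ) ∈ closure K := by
      rw [Metric.mem_closure_iff]
      intro ε hε
      obtain ⟨k, hk⟩ := exists_nat_one_div_lt hε
      obtain ⟨i, hi, hik⟩ := hyinf.exists_gt k
      have hSi : Sk i = y.1 := hSy i hi
      have hziK : u i + (z:ℝ) ∈ K := by
        have : z ∈ Sk i := by rw [hSi]; exact hz
        exact (Finset.mem_filter.1 this).2
      refine ⟨u i + (z:ℝ), hziK, ?_⟩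
      rw [Real.dist_eq]
      have h1 : |t + (z:ℝ) - (u i + (z:ℝ))| = |u i - t| := by
        rw [abs_sub_comm]
        congr 1
        ring
      rw [h1]
      calc |u i - t| < 1/(i+1) := (hu i).2.1
        _ ≤ 1/(k+1) := by
            apply one_div_le_one_div_of_le (by positivity)
            have : (k:ℝ) ≤ i := by exact_mod_cast le_of_lt hik
            linarith
        _ < ε := hk
    rwa [hc.isClosed.closure_eq] at hclosure
  have hSsub : (y.1 : Set ℤ) ⊆ {z : ℤ | t + (z:ℝ) ∈ K} := fun z hz => hKmem z hz
  obtain ⟨i0, hi0⟩ := hyinf.nonempty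
  calc (m : ℕ∞) = ((Sk i0).card : ℕ∞) := by rw [hcard i0]
    _ = ((y.1 : Set ℤ)).encard := by rw [hSy i0 hi0, encard_coe_eq_coe_finsetCard]
    _ ≤ _ := encard_le_encard hSsub


open MeasureTheory Set Filter Topology Pointwise
open scoped ENNReal Classical

lemma codingMap_eq (ω : ℕ → Fin d) : codingMap d n ω = e (F n ω) := rfl

lemma circleMeasure_eq : circleMeasure = Measure.map e (volume.restrict (Ico (0:ℝ) 1)) := rfl

lemma isCompact_Ov (hc : IsCompact K) : IsCompact (Ov n K) := by
  rw [Ov]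
  apply isCompact_iUnion
  intro p
  apply isCompact_iUnion
  intro _
  exact ((hc.image (continuous_gm n p.1)).inter_right
    (hc.image (continuous_gm n p.2)).isClosed)

lemma measurable_e_image_UU (hc : IsCompact K) : MeasurableSet (e '' UU n K) := by
  rw [UU, image_iUnion]
  apply MeasurableSet.iUnion
  intro k
  rw [image_iUnion]
  apply MeasurableSet.iUnion
  intro w
  have h1 : IsCompact ((fun z => (∑ j : Fin k, (n (w j) : ℝ) / (d:ℝ) ^ ((j:ℕ)+1)) + z / (d:ℝ)^k)
      '' Ov n K) := by
    apply (isCompact_Ov n hc).image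
    apply Continuous.add continuous_const
    exact continuous_id.div_const _
  exact ((h1.image continuous_e).isClosed).measurableSet

lemma preimage_e_image (X : Set ℝ) :
    e ⁻¹' (e '' X) = ⋃ z : ℤ, (fun x : ℝ => x + (z:ℝ)) '' X := by
  ext x
  simp only [mem_preimage, mem_image, mem_iUnion]
  constructor
  · rintro ⟨u, hu, heq⟩
    obtain ⟨z, hz⟩ := e_eq_iff.1 heq.symm
    exact ⟨z, u, hu, hz.symm⟩
  · rintro ⟨z, u, hu, rfl⟩
    exact ⟨u, hu, (e_add_int u z).symm⟩

lemma vol_preimage_e_image_null {X : Set ℝ} (hX : volume X = 0) :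
    volume (e ⁻¹' (e '' X)) = 0 := by
  rw [preimage_e_image]
  apply measure_iUnion_null
  intro z
  have h1 : (fun x : ℝ => x + (z:ℝ)) '' X = (fun x : ℝ => (z:ℝ) + x) '' X := by
    apply image_congr
    intro x _
    ring
  rw [h1, vol_add_image, hX]

lemma measurable_e_image_open {O : Set ℝ} (hO : IsOpen O) : MeasurableSet (e '' O) := by
  have key : e '' O = ⋃ (q : ℚ × ℚ) (_ : Icc ((q.1:ℝ)) ((q.2:ℝ)) ⊆ O),
      e '' Icc ((q.1:ℝ)) ((q.2:ℝ)) := by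
    ext p
    constructor
    · rintro ⟨x, hx, rfl⟩
      obtain ⟨ε, hε, hball⟩ := Metric.isOpen_iff.1 hO x hx
      obtain ⟨q1, hq1a, hq1b⟩ := exists_rat_btwn (show x - ε < x by linarith)
      obtain ⟨q2, hq2a, hq2b⟩ := exists_rat_btwn (show x < x + ε by linarith)
      apply mem_iUnion.2
      refine ⟨(q1, q2), mem_iUnion.2 ⟨?_, ⟨x, ⟨le_of_lt hq1b, le_of_lt hq2a⟩, rfl⟩⟩⟩
      intro y hy
      apply hball
      rw [Metric.mem_ball, Real.dist_eq, abs_sub_lt_iff]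
      obtain ⟨hy1, hy2⟩ := hy
      have hq1c : (q1:ℝ) ≤ y := hy1
      have hq2c : y ≤ (q2:ℝ) := hy2
      constructor <;> linarith
    · intro hp
      obtain ⟨q, hq⟩ := mem_iUnion.1 hp
      obtain ⟨hsub, hmem⟩ := mem_iUnion.1 hq
      exact image_mono hsub hmem
  rw [key]
  apply MeasurableSet.iUnion
  intro q
  apply MeasurableSet.iUnion
  intro _
  exact ((isCompact_Icc.image continuous_e).isClosed).measurableSet


end MultAux

open MeasureTheory Set Filter Topology MultAux
open scoped ENNReal NNReal Classical

/-- **Multiplicity Theorem** for `f(z) = z^d`: there is a natural number `m`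
(the multiplicity) such that `Leb(K) = m`, almost every fiber of the coding map
has exactly `m` elements, and every fiber over the circle has at least `m`
elements. -/
theorem multiplicity_theorem_pow_d (d : ℕ) (hd : 2 ≤ d) (n : Fin d → ℤ)
    (K : Set ℝ) (hne : K.Nonempty) (hc : IsCompact K)
    (hK : K = ⋃ i : Fin d, (fun x : ℝ => (x + (n i : ℝ)) / (d : ℝ)) '' K) :
    ∃ m : ℕ,
      volume K = (m : ENNReal) ∧
      (∀ᵐ p ∂circleMeasure,
        Set.encard {ω : ℕ → Fin d | codingMap d n ω = p} = (m : ℕ∞)) ∧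
      (∀ p : ℂ, ‖p‖ = 1 →
        (m : ℕ∞) ≤ Set.encard {ω : ℕ → Fin d | codingMap d n ω = p}) := by
  classical
  have hK' : K = ⋃ i : Fin d, gm n i '' K := hK
  have hmK : MeasurableSet K := hc.isClosed.measurableSet
  obtain ⟨Rr, hRr⟩ := hc.isBounded.subset_closedBall 0
  set R : ℕ := ⌈Rr⌉₊ with hR
  have hRK : ∀ x ∈ K, |x| ≤ (R:ℝ) := by
    intro x hx
    have h1 := hRr hx
    rw [Metric.mem_closedBall, Real.dist_eq, sub_zero] at h1
    exact h1.trans (Nat.le_ceil Rr)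
  obtain ⟨m, hm1, hm2⟩ := exists_m n hd hne hc hK' hRK
  obtain ⟨cf, hcf⟩ := exists_cfun n hd hc hK'
  refine ⟨m, hm1, ?_, ?_⟩
  · -- a.e. statement
    rw [ae_iff]
    set Bad : Set ℂ :=
      {p : ℂ | ¬ {ω : ℕ → Fin d | codingMap d n ω = p}.encard = (m:ℕ∞)} with hBad
    have key : ∀ ε : ℝ≥0, 0 < ε → circleMeasure Bad ≤ 0 + (ε:ℝ≥0∞) := by
      intro ε hε
      rw [zero_add]
      set B2 : Set ℝ := {u : ℝ | Phi K u ≠ (m:ℝ≥0∞)} ∩ Ioo (0:ℝ) 1 with hB2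
      have hmPhiset : MeasurableSet {u : ℝ | Phi K u ≠ (m:ℝ≥0∞)} := by
        have heq : {u : ℝ | Phi K u ≠ (m:ℝ≥0∞)} = (Phi K ⁻¹' {(m:ℝ≥0∞)})ᶜ := rfl
        rw [heq]
        exact (measurable_Phi hmK (measurableSet_singleton _)).compl
      have hB2null : volume B2 = 0 := by
        have h1 : (volume.restrict (Ioc (0:ℝ) (0+1))) {u : ℝ | Phi K u ≠ (m:ℝ≥0∞)} = 0 :=
          (ae_iff).1 hm2
        rw [Measure.restrict_apply hmPhiset] at h1
        apply measure_mono_null _ h1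
        intro u hu
        exact ⟨hu.1, ⟨hu.2.1, by rw [zero_add]; exact le_of_lt hu.2.2⟩⟩
      have hlt : volume B2 < (ε:ℝ≥0∞) := by
        rw [hB2null]
        exact ENNReal.coe_pos.2 hε
      obtain ⟨O, hB2O, hOopen, hOvol⟩ := Set.exists_isOpen_lt_of_lt B2 _ hlt
      set O' : Set ℝ := O ∩ Ioo (0:ℝ) 1 with hO'
      have hO'open : IsOpen O' := hOopen.inter isOpen_Ioo
      have hB2O' : B2 ⊆ O' := fun u hu => ⟨hB2O hu, hu.2⟩
      have hO'vol : volume O' ≤ (ε:ℝ≥0∞) :=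
        le_of_lt (lt_of_le_of_lt (measure_mono inter_subset_left) hOvol)
      set C : Set ℂ := ((((Metric.sphere (0:ℂ) 1)ᶜ ∪ e '' UU n K) ∪ e '' O') ∪ {e 0}) with hC
      have hmC : MeasurableSet C :=
        (((Metric.isClosed_sphere.measurableSet.compl).union (measurable_e_image_UU n hc)).union
          (measurable_e_image_open hO'open)).union (measurableSet_singleton _)
      have hcov : Bad ⊆ C := by
        intro p hp
        by_contra hpC
        apply hp
        rw [hC] at hpC
        simp only [mem_union, not_or] at hpC
        obtain ⟨⟨⟨h1, h2⟩, h3⟩, h4⟩ := hpC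
        have hsp : ‖p‖ = 1 := by
          rw [mem_compl_iff, not_not] at h1
          rwa [mem_sphere_zero_iff_norm] at h1
        obtain ⟨t, htIco, hte⟩ := exists_t hsp
        have ht0 : t ≠ 0 := by
          rintro rfl
          exact h4 (by rw [mem_singleton_iff, ← hte])
        have htIoo : t ∈ Ioo (0:ℝ) 1 := ⟨lt_of_le_of_ne htIco.1 (Ne.symm ht0), htIco.2⟩
        have htIcc : t ∈ Icc (0:ℝ) 1 := ⟨le_of_lt htIoo.1, le_of_lt htIoo.2⟩
        have hU : ∀ z : ℤ, t + (z:ℝ) ∉ UU n K := by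
          intro z hz
          apply h2
          rw [← hte, ← e_add_int t z]
          exact mem_image_of_mem e hz
        have hPhi : Phi K t = (m:ℝ≥0∞) := by
          by_contra hne2
          apply h3
          rw [← hte]
          exact mem_image_of_mem e (hB2O' ⟨hne2, htIoo⟩)
        have hfib := fib_eq n hd hne hc hK' hRK cf hcf htIcc hU
        have hcardm : (((Jw R).filter (fun z : ℤ => t + (z:ℝ) ∈ K))).card = m := by
          have hpc := Phi_eq_card hRK htIcc
          rw [hPhi] at hpc
          exact_mod_cast hpc.symm
        rw [← hte]
        show {ω : ℕ → Fin d | codingMap d n ω = e t}.encard = (m:ℕ∞)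
        have hseteq : {ω : ℕ → Fin d | codingMap d n ω = e t}
            = {ω : ℕ → Fin d | e (F n ω) = e t} := rfl
        rw [hseteq, hfib, hcardm]
      calc circleMeasure Bad ≤ circleMeasure C := measure_mono hcov
        _ = volume (e ⁻¹' C ∩ Ico (0:ℝ) 1) := by
            rw [circleMeasure_eq, Measure.map_apply measurable_e hmC,
              Measure.restrict_apply (measurable_e hmC)]
        _ ≤ (ε:ℝ≥0∞) := by
            have hsplit : e ⁻¹' C ∩ Ico (0:ℝ) 1 ⊆
                (((e ⁻¹' ((Metric.sphere (0:ℂ) 1)ᶜ)) ∪ (e ⁻¹' (e '' UU n K)))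
                  ∪ ((e ⁻¹' (e '' O')) ∩ Ico (0:ℝ) 1)) ∪ (e ⁻¹' ({e 0} : Set ℂ)) := by
              intro x hx
              obtain ⟨hx1, hx2⟩ := hx
              rw [hC] at hx1
              simp only [preimage_union, mem_union] at hx1
              rcases hx1 with ((h|h)|h)|h
              · exact Or.inl (Or.inl (Or.inl h))
              · exact Or.inl (Or.inl (Or.inr h))
              · exact Or.inl (Or.inr ⟨h, hx2⟩)
              · exact Or.inr h
            have hA1 : volume (e ⁻¹' ((Metric.sphere (0:ℂ) 1)ᶜ)) = 0 := by
              have hempty : e ⁻¹' ((Metric.sphere (0:ℂ) 1)ᶜ) = ∅ := by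
                ext x
                simp only [mem_preimage, mem_compl_iff, mem_sphere_zero_iff_norm,
                  mem_empty_iff_false, iff_false, not_not]
                exact norm_e x
              rw [hempty, measure_empty]
            have hA2 : volume (e ⁻¹' (e '' UU n K)) = 0 :=
              vol_preimage_e_image_null (vol_UU n hd hc hK')
            have hA3 : volume ((e ⁻¹' (e '' O')) ∩ Ico (0:ℝ) 1) ≤ (ε:ℝ≥0∞) := by
              have hsub3 : (e ⁻¹' (e '' O')) ∩ Ico (0:ℝ) 1 ⊆ O' := by
                intro x hx
                obtain ⟨hx1, hx2⟩ := hx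
                rw [preimage_e_image] at hx1
                obtain ⟨z, hz⟩ := mem_iUnion.1 hx1
                obtain ⟨u, hu, hux⟩ := hz
                have huIoo : u ∈ Ioo (0:ℝ) 1 := hu.2
                have hux' : u + (z:ℝ) = x := hux
                have hz0 : z = 0 := by
                  have hb1 : (-1:ℝ) < (z:ℝ) := by
                    linarith [huIoo.1, huIoo.2, hx2.1, hx2.2, hux']
                  have hb2 : (z:ℝ) < 1 := by
                    linarith [huIoo.1, huIoo.2, hx2.1, hx2.2, hux']
                  have hb1' : (-1:ℤ) < z := by exact_mod_cast hb1
                  have hb2' : z < 1 := by exact_mod_cast hb2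
                  omega
                rw [hz0] at hux
                simp only [Int.cast_zero, add_zero] at hux
                rwa [← hux]
              exact le_trans (measure_mono hsub3) hO'vol
            have hA4 : volume (e ⁻¹' ({e 0} : Set ℂ)) = 0 := by
              have hsub4 : e ⁻¹' ({e 0} : Set ℂ) ⊆ Set.range ((↑) : ℤ → ℝ) := by
                intro x hx
                have hxe : e x = e 0 := hx
                obtain ⟨z, hz⟩ := e_eq_iff.1 hxe
                exact ⟨z, by linarith⟩
              exact measure_mono_null hsub4 ((countable_range _).measure_zero volume)
            calc volume (e ⁻¹' C ∩ Ico (0:ℝ) 1)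
                ≤ volume ((((e ⁻¹' ((Metric.sphere (0:ℂ) 1)ᶜ)) ∪ (e ⁻¹' (e '' UU n K)))
                  ∪ ((e ⁻¹' (e '' O')) ∩ Ico (0:ℝ) 1)) ∪ (e ⁻¹' ({e 0} : Set ℂ))) :=
                  measure_mono hsplit
              _ ≤ volume ((((e ⁻¹' ((Metric.sphere (0:ℂ) 1)ᶜ)) ∪ (e ⁻¹' (e '' UU n K)))
                  ∪ ((e ⁻¹' (e '' O')) ∩ Ico (0:ℝ) 1))) + volume (e ⁻¹' ({e 0} : Set ℂ)) :=
                  measure_union_le _ _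
              _ ≤ (volume ((e ⁻¹' ((Metric.sphere (0:ℂ) 1)ᶜ)) ∪ (e ⁻¹' (e '' UU n K)))
                  + volume ((e ⁻¹' (e '' O')) ∩ Ico (0:ℝ) 1)) + volume (e ⁻¹' ({e 0} : Set ℂ)) := by
                  gcongr
                  exact measure_union_le _ _
              _ ≤ ((volume (e ⁻¹' ((Metric.sphere (0:ℂ) 1)ᶜ)) + volume (e ⁻¹' (e '' UU n K)))
                  + volume ((e ⁻¹' (e '' O')) ∩ Ico (0:ℝ) 1)) + volume (e ⁻¹' ({e 0} : Set ℂ)) := by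
                  gcongr
                  exact measure_union_le _ _
              _ ≤ (ε:ℝ≥0∞) := by
                  rw [hA1, hA2, hA4, zero_add, zero_add, add_zero]
                  exact hA3
    have h0 : circleMeasure Bad ≤ 0 := ENNReal.le_of_forall_pos_le_add (fun ε hε _ => key ε hε)
    exact le_antisymm h0 (zero_le)
  · -- every fiber
    intro p hp
    obtain ⟨t, htIco, hte⟩ := exists_t hp
    have htIcc : t ∈ Icc (0:ℝ) 1 := ⟨htIco.1, le_of_lt htIco.2⟩
    have h1 := lower_bound (K := K) hc hRK hm2 htIcc
    have h2 := fib_ge n hd hne hc hK' cf hcf t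
    rw [← hte]
    exact le_trans h1 h2
end

section
/- If K has positive Lebesgue measure, then K has nonempty interior in ℝ. (Instance, for f(z) = z^d, of the paper's corollary that a surjective coding forces the Julia tile K to have nonempty interior in the relative topology of the lifted Julia set.) -/
open MeasureTheory

open Set

/-- For `f(z) = z^d`: if the attractor `K` of the lifted iterated function
system `gᵢ(x) = (x + nᵢ)/d` has positive Lebesgue measure, then `K` has
nonempty interior in `ℝ`. -/
theorem nonempty_interior_of_pos_measure_pow_d (d : ℕ) (hd : 2 ≤ d)
    (n : Fin d → ℤ) (K : Set ℝ) (hne : K.Nonempty) (hc : IsCompact K)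
    (hK : K = ⋃ i : Fin d, (fun x : ℝ => (x + (n i : ℝ)) / (d : ℝ)) '' K)
    (hpos : 0 < volume K) :
    (interior K).Nonempty := by
  have hd1 : (1 : ℕ) < d := hd
  have hd0 : (d : ℝ) ≠ 0 := by positivity
  set π : ℝ → AddCircle (1 : ℝ) := ((↑) : ℝ → AddCircle (1:ℝ)) with hπ
  set A : Set (AddCircle (1 : ℝ)) := π '' K with hA
  have hAcp : IsCompact A := hc.image (AddCircle.continuous_mk' 1)
  have hAm : MeasurableSet A := hAcp.isClosed.measurableSet
  -- invariance under multiplication by d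
  have hinv : (fun y : AddCircle (1:ℝ) => d • y) '' A ⊆ A := by
    rintro _ ⟨_, ⟨x, hx, rfl⟩, rfl⟩
    rw [hK] at hx
    obtain ⟨i, y, hy, hxy⟩ := by simpa using hx
    refine ⟨y, hy, ?_⟩
    have hdx : d • x = y + (n i : ℝ) := by
      rw [nsmul_eq_mul, ← hxy]; field_simp
    have h3 : π (y + (n i : ℝ)) = π y + π (n i : ℝ) := rfl
    have h4 : π ((n i : ℝ)) = 0 := by
      rw [hπ, AddCircle.coe_eq_zero_iff]
      exact ⟨n i, by simp⟩
    have h5 : d • π x = π (d • x) := (AddCircle.coe_nsmul (1:ℝ)).symm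
    show π y = d • π x
    rw [h5, hdx, h3, h4, add_zero]
  -- ergodicity
  have herg : Ergodic (fun y : AddCircle (1:ℝ) => d • y) volume :=
    AddCircle.ergodic_nsmul hd1
  have := herg.ae_empty_or_univ_of_image_ae_le hAm.nullMeasurableSet
    (HasSubset.Subset.eventuallyLE hinv)
  rcases this with h0 | h1
  · -- A null: contradiction with hpos
    exfalso
    have hA0 : volume A = 0 := by
      simpa using (measure_congr h0)
    have hcover : K ⊆ ⋃ m : ℤ, π ⁻¹' A ∩ Ioc (m : ℝ) ((m : ℝ) + 1) := by
      intro x hx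
      have : x ∈ ⋃ m : ℤ, Ioc (m : ℝ) ((m : ℝ) + 1) := by
        rw [iUnion_Ioc_intCast]; trivial
      obtain ⟨m, hm⟩ := by simpa using this
      exact mem_iUnion.2 ⟨m, ⟨⟨x, hx, rfl⟩, hm⟩⟩
    have hle : volume K ≤ ∑' m : ℤ, volume (π ⁻¹' A ∩ Ioc (m : ℝ) ((m : ℝ) + 1)) :=
      le_trans (measure_mono hcover) (measure_iUnion_le _)
    have hz : ∀ m : ℤ, volume (π ⁻¹' A ∩ Ioc (m : ℝ) ((m : ℝ) + 1)) = 0 := by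
      intro m
      have := AddCircle.add_projection_respects_measure (T := 1) (m : ℝ) hAm
      rw [hA0] at this
      simpa using this.symm
    simp only [hz, tsum_zero] at hle
    exact hpos.ne' (le_antisymm hle zero_le)
  · -- A = univ, so translates of K cover ℝ
    have hAuniv : A = univ := by
      have hcl : IsClosed A := hAcp.isClosed
      have hc0 : volume Aᶜ = 0 := ae_eq_univ.mp h1
      have hop : IsOpen Aᶜ := hcl.isOpen_compl
      have := (hop.measure_eq_zero_iff (μ := volume)).mp hc0
      exact compl_empty_iff.mp this
    have hcov : (⋃ m : ℤ, (fun y : ℝ => y + (m : ℝ)) '' K) = univ := by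
      apply eq_univ_of_forall
      intro x
      have : π x ∈ A := by rw [hAuniv]; trivial
      obtain ⟨y, hy, hyx⟩ := this
      have hsub : ((y - x : ℝ) : AddCircle (1:ℝ)) = 0 := by
        have h0 : π y - π x = 0 := sub_eq_zero.mpr hyx
        rw [hπ] at h0
        simpa [sub_eq_add_neg, QuotientAddGroup.mk_add, QuotientAddGroup.mk_neg] using h0
      rw [AddCircle.coe_eq_zero_iff] at hsub
      obtain ⟨m, hm⟩ := hsub
      refine mem_iUnion.2 ⟨-m, ⟨y, hy, ?_⟩⟩
      simp only [Int.cast_neg]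
      have : (m : ℝ) = y - x := by simpa using hm
      linarith
    obtain ⟨m, hm⟩ := nonempty_interior_of_iUnion_of_closed
      (fun m : ℤ => ((Homeomorph.addRight ((m:ℝ))).isClosedMap _ hc.isClosed)) hcov
    have him : (fun y : ℝ => y + (m:ℝ)) '' K = (Homeomorph.addRight ((m:ℝ))) '' K := rfl
    rw [← (Homeomorph.addRight ((m:ℝ))).image_interior] at hm
    exact hm.of_image
end

section
/- Let n_1 < n_2 be integers and define π : {1,2}^ℕ → S¹ by π(ω) = exp(2πi Σ_{k=1}^∞ n_{ω_k} 2^{-k}). Then π is surjective onto S¹, and for Haar-almost every p ∈ S¹ the fiber π^{-1}(p) has exactly n_2 − n_1 elements; that is, π is almost (n_2 − n_1)-to-one. -/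
open MeasureTheory

noncomputable def gmap (ω : ℕ → Fin 2) : ℝ := ∑' k : ℕ, ((ω k : ℕ) : ℝ) / 2 ^ (k + 1)

lemma summable_aux (c : ℕ → ℝ) (h0 : ∀ k, 0 ≤ c k) (h1 : ∀ k, c k ≤ 1) :
    Summable (fun k : ℕ => c k / 2 ^ (k + 1)) := by
  apply Summable.of_nonneg_of_le (fun k => div_nonneg (h0 k) (by positivity))
    (fun k => ?_) (summable_geometric_two' 1)
  have e : (1:ℝ) / 2 / 2 ^ k = 1 / 2 ^ (k+1) := by ring
  rw [e]
  exact div_le_div_of_nonneg_right (h1 k) (by positivity) |>.trans_eq (by ring) |>.trans_eq rfl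

lemma tsum_half_pow : ∑' k : ℕ, (1:ℝ) / 2 ^ (k + 1) = 1 := by
  have h := tsum_geometric_two' 1
  have e : ∀ k : ℕ, (1:ℝ) / 2 ^ (k + 1) = 1 / 2 / 2 ^ k := fun k => by ring
  exact (tsum_congr e).trans h

lemma fin2_le (i : Fin 2) : ((i : ℕ) : ℝ) ≤ 1 := by
  have := i.is_lt; exact_mod_cast Nat.lt_succ_iff.mp this

lemma summable_g (ω : ℕ → Fin 2) : Summable (fun k : ℕ => ((ω k : ℕ) : ℝ) / 2 ^ (k + 1)) :=
  summable_aux _ (fun k => by positivity) (fun k => fin2_le _)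

lemma g_nonneg (ω : ℕ → Fin 2) : 0 ≤ gmap ω :=
  tsum_nonneg (fun k => by positivity)

lemma g_le_one (ω : ℕ → Fin 2) : gmap ω ≤ 1 := by
  rw [← tsum_half_pow]
  exact Summable.tsum_le_tsum (fun k => div_le_div_of_nonneg_right (fin2_le _) (by positivity) |>.trans_eq rfl)
    (summable_g ω) (summable_aux _ (fun _ => zero_le_one) (fun _ => le_refl 1))

/-- doubling map -/
noncomputable def dbl (y : ℝ) : ℝ := if 1 ≤ 2 * y then 2 * y - 1 else 2 * y

noncomputable def orb (x : ℝ) : ℕ → ℝ := fun k => dbl^[k] x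

noncomputable def bits (x : ℝ) (k : ℕ) : Fin 2 := if 1 ≤ 2 * orb x k then 1 else 0

lemma orb_succ (x : ℝ) (k : ℕ) : orb x (k + 1) = dbl (orb x k) := by
  simp [orb, Function.iterate_succ_apply']

lemma orb_mem (x : ℝ) (hx : x ∈ Set.Icc (0:ℝ) 1) (k : ℕ) : orb x k ∈ Set.Icc (0:ℝ) 1 := by
  induction k with
  | zero => exact hx
  | succ k ih =>
    rw [orb_succ, dbl]
    obtain ⟨h0, h1⟩ := ih
    split <;> constructor <;> [linarith; linarith; linarith; linarith]

lemma orb_expansion (x : ℝ) (N : ℕ) :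
    x = (∑ k ∈ Finset.range N, ((bits x k : ℕ) : ℝ) / 2 ^ (k + 1)) + orb x N / 2 ^ N := by
  induction N with
  | zero => simp [orb]
  | succ N ih =>
    rw [Finset.sum_range_succ, orb_succ, dbl, bits]
    split <;> rename_i hc
    · simp only [Fin.val_one, Nat.cast_one]
      conv_lhs => rw [ih]
      ring
    · simp only [Fin.val_zero, Nat.cast_zero]
      conv_lhs => rw [ih]
      ring

lemma g_bits (x : ℝ) (hx : x ∈ Set.Icc (0:ℝ) 1) : gmap (bits x) = x := by
  have hs := summable_g (bits x)
  have htend := hs.hasSum.tendsto_sum_nat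
  have h2 : Filter.Tendsto (fun N => ∑ k ∈ Finset.range N, ((bits x k : ℕ) : ℝ) / 2 ^ (k + 1))
      Filter.atTop (nhds x) := by
    have key : ∀ N, ∑ k ∈ Finset.range N, ((bits x k : ℕ) : ℝ) / 2 ^ (k + 1) = x - orb x N / 2 ^ N :=
      fun N => by have := orb_expansion x N; linarith
    have hb : Filter.Tendsto (fun N : ℕ => orb x N / 2 ^ N) Filter.atTop (nhds 0) := by
      apply squeeze_zero (fun N => div_nonneg (orb_mem x hx N).1 (by positivity))
        (g := fun N : ℕ => (1/2 : ℝ) ^ N)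
        (fun N => by
          show orb x N / 2 ^ N ≤ (1/2 : ℝ) ^ N
          rw [div_pow, one_pow]
          exact div_le_div_of_nonneg_right (orb_mem x hx N).2 (by positivity) |>.trans_eq rfl)
      exact tendsto_pow_atTop_nhds_zero_of_lt_one (by norm_num) (by norm_num)
    have h3 : Filter.Tendsto (fun N : ℕ => x - orb x N / 2 ^ N) Filter.atTop (nhds x) := by
      simpa using Filter.Tendsto.sub (tendsto_const_nhds (x := x) (f := Filter.atTop)) hb
    exact h3.congr (fun N => (key N).symm)
  exact tendsto_nhds_unique htend h2

lemma g_split (ω : ℕ → Fin 2) (N : ℕ) :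
    (∑ k ∈ Finset.range N, ((ω k : ℕ) : ℝ) / 2 ^ (k + 1)) +
      ∑' j : ℕ, ((ω (j + N) : ℕ) : ℝ) / 2 ^ (j + N + 1) = gmap ω :=
  Summable.sum_add_tsum_nat_add N (summable_g ω)

lemma tail_nonneg (ω : ℕ → Fin 2) (N : ℕ) :
    0 ≤ ∑' j : ℕ, ((ω (j + N) : ℕ) : ℝ) / 2 ^ (j + N + 1) :=
  tsum_nonneg (fun k => by positivity)

lemma tail_le (ω : ℕ → Fin 2) (N : ℕ) :
    ∑' j : ℕ, ((ω (j + N) : ℕ) : ℝ) / 2 ^ (j + N + 1) ≤ 1 / 2 ^ N := by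
  have h1 : ∑' j : ℕ, (1 / 2 ^ N : ℝ) * (1 / 2 ^ (j + 1)) = 1 / 2 ^ N := by
    rw [tsum_mul_left, tsum_half_pow, mul_one]
  rw [← h1]
  apply Summable.tsum_le_tsum _ ((summable_g ω).comp_injective (add_left_injective N)) _
  · intro j
    show ((ω (j + N) : ℕ) : ℝ) / 2 ^ (j + N + 1) ≤ _
    have : (1 / 2 ^ N : ℝ) * (1 / 2 ^ (j + 1)) = 1 / 2 ^ (j + N + 1) := by
      rw [pow_add, pow_add]; ring
    rw [this]
    exact div_le_div_of_nonneg_right (fin2_le _) (by positivity)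
  · exact Summable.mul_left _ (summable_aux _ (fun _ => zero_le_one) (fun _ => le_refl 1))

lemma key_rational (ω ω' : ℕ → Fin 2) (k : ℕ) (hlt : ∀ j < k, ω j = ω' j)
    (h1 : ω k = 1) (h0 : ω' k = 0) (heq : gmap ω = gmap ω') : ¬ Irrational (gmap ω) := by
  have hsplit := g_split ω (k + 1)
  have hsplit' := g_split ω' (k + 1)
  set Tω := ∑' j : ℕ, ((ω (j + (k+1)) : ℕ) : ℝ) / 2 ^ (j + (k+1) + 1) with hTω
  set Tω' := ∑' j : ℕ, ((ω' (j + (k+1)) : ℕ) : ℝ) / 2 ^ (j + (k+1) + 1) with hTω'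
  have hsum : ∑ j ∈ Finset.range (k+1), ((ω j : ℕ) : ℝ) / 2 ^ (j + 1)
      = (∑ j ∈ Finset.range (k+1), ((ω' j : ℕ) : ℝ) / 2 ^ (j + 1)) + 1 / 2 ^ (k + 1) := by
    rw [Finset.sum_range_succ, Finset.sum_range_succ, h1, h0]
    rw [Finset.sum_congr rfl (fun j hj => by rw [hlt j (Finset.mem_range.mp hj)])]
    simp
  have hT0 : Tω = 0 := by
    have h2 := tail_le ω' (k+1)
    have h3 := tail_nonneg ω (k+1)
    rw [← hTω'] at h2
    rw [← hTω] at h3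
    nlinarith [hsplit, hsplit', heq]
  have hfin : gmap ω = ∑ j ∈ Finset.range (k+1), ((ω j : ℕ) : ℝ) / 2 ^ (j + 1) := by
    rw [← hsplit, hT0, add_zero]
  intro hirr
  apply hirr
  refine ⟨∑ j ∈ Finset.range (k+1), ((ω j : ℕ) : ℚ) / 2 ^ (j + 1), ?_⟩
  rw [hfin]
  push_cast
  rfl

lemma g_inj_irrational {x : ℝ} (hx : Irrational x) {ω ω' : ℕ → Fin 2}
    (hω : gmap ω = x) (hω' : gmap ω' = x) : ω = ω' := by
  by_contra hne
  have hex : ∃ k, ω k ≠ ω' k := by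
    by_contra hall
    push_neg at hall
    exact hne (funext hall)
  classical
  let k := Nat.find hex
  have hk : ω k ≠ ω' k := Nat.find_spec hex
  have hmin : ∀ j < k, ω j = ω' j := fun j hj => by
    by_contra hc
    exact absurd hj (not_lt.mpr (Nat.find_le hc))
  have d : ∀ i : Fin 2, i = 0 ∨ i = 1 := by decide
  have hcases : (ω k = 1 ∧ ω' k = 0) ∨ (ω k = 0 ∧ ω' k = 1) := by
    rcases d (ω k) with h | h <;> rcases d (ω' k) with h' | h' <;> simp_all
  rcases hcases with ⟨h1, h0⟩ | ⟨h0, h1⟩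
  · exact key_rational ω ω' k hmin h1 h0 (hω.trans hω'.symm) (by rwa [hω])
  · exact key_rational ω' ω k (fun j hj => (hmin j hj).symm) h1 h0 (hω'.trans hω.symm) (by rwa [hω'])

lemma fin2_eq (i : Fin 2) : i = 0 ∨ i = 1 := by fin_cases i <;> simp

lemma codingMap_eq (n₁ n₂ : ℤ) (ω : ℕ → Fin 2) :
    codingMap 2 ![n₁, n₂] ω
      = Complex.exp (2 * Real.pi * Complex.I * ((((n₂ - n₁ : ℤ) : ℝ) * gmap ω : ℝ) : ℂ)) := by
  have hterm : ∀ k : ℕ, ((![n₁,n₂] (ω k) : ℤ) : ℝ) / (2:ℝ) ^ (k+1)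
      = (n₁:ℝ) * (1 / 2 ^ (k+1)) + ((n₂-n₁:ℤ):ℝ) * (((ω k : ℕ):ℝ) / 2 ^ (k+1)) := by
    intro k
    have hv : ((![n₁,n₂] (ω k) : ℤ) : ℝ) = (n₁:ℝ) + ((n₂-n₁:ℤ):ℝ) * ((ω k : ℕ):ℝ) := by
      rcases fin2_eq (ω k) with h | h <;> rw [h] <;> simp <;> push_cast <;> ring
    rw [hv]; ring
  have hs1 : Summable (fun k : ℕ => (n₁:ℝ) * (1 / 2 ^ (k+1))) :=
    Summable.mul_left _ (summable_aux _ (fun _ => zero_le_one) (fun _ => le_refl 1))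
  have hs2 : Summable (fun k : ℕ => ((n₂-n₁:ℤ):ℝ) * (((ω k : ℕ):ℝ) / 2 ^ (k+1))) :=
    Summable.mul_left _ (summable_g ω)
  have hts : (∑' k : ℕ, ((![n₁,n₂] (ω k) : ℤ) : ℝ) / (2:ℝ) ^ (k + 1))
      = (n₁ : ℝ) + ((n₂ - n₁ : ℤ) : ℝ) * gmap ω := by
    rw [tsum_congr hterm, Summable.tsum_add hs1 hs2, tsum_mul_left, tsum_mul_left, tsum_half_pow, gmap]
    ring
  have h1 : codingMap 2 ![n₁,n₂] ω
      = Complex.exp (2 * Real.pi * Complex.I *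
        ((((n₁:ℝ) + ((n₂-n₁:ℤ):ℝ) * gmap ω) : ℝ) : ℂ)) := by
    unfold codingMap
    rw [show ((2:ℕ):ℝ) = (2:ℝ) by norm_num, hts]
  rw [h1]
  have h2 : ((((n₁:ℝ) + ((n₂-n₁:ℤ):ℝ) * gmap ω) : ℝ) : ℂ)
      = (n₁:ℂ) + ((((n₂-n₁:ℤ):ℝ) * gmap ω : ℝ) : ℂ) := by push_cast; ring
  rw [h2, mul_add, Complex.exp_add,
    show 2 * (Real.pi:ℂ) * Complex.I * (n₁:ℂ) = (n₁:ℂ) * (2 * Real.pi * Complex.I) by ring,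
    Complex.exp_int_mul_two_pi_mul_I, one_mul]

lemma two_pi_I_ne_zero : (2 * Real.pi * Complex.I : ℂ) ≠ 0 := by
  simp [Real.pi_ne_zero, Complex.I_ne_zero]

lemma exp_two_pi_fract (s : ℝ) :
    Complex.exp (2 * Real.pi * Complex.I * ((Int.fract s : ℝ) : ℂ))
      = Complex.exp (2 * Real.pi * Complex.I * (s : ℂ)) := by
  have h : (2 * Real.pi * Complex.I * ((Int.fract s : ℝ) : ℂ))
      = 2 * Real.pi * Complex.I * (s:ℂ) - (⌊s⌋ : ℂ) * (2 * Real.pi * Complex.I) := by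
    rw [Int.fract]
    push_cast
    ring
  rw [h, Complex.exp_sub, Complex.exp_int_mul_two_pi_mul_I, div_one]

lemma sphere_eq_exp {p : ℂ} (hp : p ∈ Metric.sphere (0:ℂ) 1) :
    p = Complex.exp (2 * Real.pi * Complex.I *
      ((Int.fract (Complex.arg p / (2 * Real.pi)) : ℝ) : ℂ)) := by
  have habs : ‖p‖ = 1 := by
    rw [mem_sphere_zero_iff_norm] at hp
    exact hp
  have h1 : Complex.exp (Complex.arg p * Complex.I) = p := by
    have := Complex.norm_mul_exp_arg_mul_I p
    rwa [habs, Complex.ofReal_one, one_mul] at this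
  have hπ : (2:ℝ) * Real.pi ≠ 0 := by positivity
  have he : (2:ℝ) * Real.pi * (Complex.arg p / (2 * Real.pi)) = Complex.arg p := by
    field_simp
  have h2 : 2 * (Real.pi:ℂ) * Complex.I * ((Complex.arg p / (2 * Real.pi) : ℝ) : ℂ)
      = (Complex.arg p : ℂ) * Complex.I := by
    calc 2 * (Real.pi:ℂ) * Complex.I * ((Complex.arg p / (2 * Real.pi) : ℝ) : ℂ)
        = (((2:ℝ) * Real.pi * (Complex.arg p / (2 * Real.pi)) : ℝ) : ℂ) * Complex.I := by
          push_cast; ring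
      _ = (Complex.arg p : ℂ) * Complex.I := by rw [he]
  rw [exp_two_pi_fract, h2, h1]

lemma abs_exp_two_pi (x : ℝ) :
    ‖Complex.exp (2 * Real.pi * Complex.I * (x : ℂ))‖ = 1 := by
  rw [Complex.norm_exp]
  have : (2 * Real.pi * Complex.I * (x : ℂ)).re = 0 := by
    simp [Complex.mul_re, Complex.mul_im]
  rw [this, Real.exp_zero]

/-- For `f(z) = z²` with lift data `(n₁/2, n₂/2)`, `n₁ < n₂`: the coding map is
surjective onto the unit circle and almost every fiber has exactly `n₂ - n₁`
elements, i.e. `π` is almost `(n₂ - n₁)`-to-one. -/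
theorem coding_map_almost_n_to_one (n₁ n₂ : ℤ) (h : n₁ < n₂) :
    Set.range (codingMap 2 ![n₁, n₂]) = Metric.sphere (0 : ℂ) 1 ∧
    ∀ᵐ p ∂circleMeasure,
      Set.encard {ω : ℕ → Fin 2 | codingMap 2 ![n₁, n₂] ω = p} =
        ((n₂ - n₁).toNat : ℕ∞) := by
  classical
  set m : ℤ := n₂ - n₁ with hmdef
  have hm : 0 < m := by omega
  set mr : ℝ := ((m : ℤ) : ℝ) with hmrdef
  have hmr1 : 1 ≤ mr := by
    have h1 : (1:ℤ) ≤ m := hm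
    rw [hmrdef]
    exact_mod_cast h1
  have hmr0 : (0:ℝ) < mr := by linarith
  have hmrne : mr ≠ 0 := ne_of_gt hmr0
  set m' : ℕ := m.toNat with hm'def
  have hm'r : (m' : ℝ) = mr := by
    rw [hmrdef, hm'def]
    exact_mod_cast congrArg (Int.cast : ℤ → ℝ) (Int.toNat_of_nonneg hm.le)
  constructor
  · -- surjectivity
    ext p
    constructor
    · rintro ⟨ω, rfl⟩
      rw [mem_sphere_zero_iff_norm, codingMap_eq, abs_exp_two_pi]
    · intro hp
      set t : ℝ := Int.fract (Complex.arg p / (2 * Real.pi)) with htdef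
      have ht0 : 0 ≤ t := Int.fract_nonneg _
      have ht1 : t < 1 := Int.fract_lt_one _
      have hx : t / mr ∈ Set.Icc (0:ℝ) 1 := by
        constructor
        · positivity
        · rw [div_le_one hmr0]; linarith
      refine ⟨bits (t / mr), ?_⟩
      rw [codingMap_eq, g_bits _ hx]
      have : mr * (t / mr) = t := by field_simp
      rw [this]
      exact (sphere_eq_exp hp).symm
  · -- almost everywhere fiber count
    set e : ℝ → ℂ := fun x : ℝ => Complex.exp (2 * Real.pi * Complex.I * (x : ℂ)) with hedef
    have he_meas : Measurable e := by
      apply Continuous.measurable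
      exact Complex.continuous_exp.comp (continuous_const.mul Complex.continuous_ofReal)
    set Bad : Set ℂ := (Metric.sphere (0:ℂ) 1)ᶜ ∪ ⋃ k : ℕ, (fun p : ℂ => p ^ (k+1)) ⁻¹' {1}
      with hBaddef
    have hBadM : MeasurableSet Bad := by
      apply MeasurableSet.union
      · exact (Metric.isClosed_sphere).measurableSet.compl
      · exact MeasurableSet.iUnion fun k =>
          (continuous_pow (k+1)).measurable (measurableSet_singleton 1)
    have hBad0 : circleMeasure Bad = 0 := by
      rw [circleMeasure, Measure.map_apply he_meas hBadM]
      refine measure_mono_null ?_ ((Set.countable_range ((↑) : ℚ → ℝ)).measure_zero _)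
      · intro x hx
        have hex : e x ∈ Bad := hx
        rw [hBaddef] at hex
        rcases hex with hc | hc
        · exfalso
          apply hc
          rw [mem_sphere_zero_iff_norm, hedef, abs_exp_two_pi]
        · obtain ⟨S, ⟨k, rfl⟩, hS⟩ := hc
          simp only [Set.mem_preimage, Set.mem_singleton_iff] at hS
          have h1 : Complex.exp (((k+1:ℕ):ℂ) * (2 * Real.pi * Complex.I * (x:ℂ))) = 1 := by
            rw [Complex.exp_nat_mul]
            exact hS
          obtain ⟨j, hj⟩ := Complex.exp_eq_one_iff.mp h1
          have h2 : (((k:ℝ)+1) * x : ℝ) = ((j:ℝ) : ℝ) := by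
            have h3 : ((((k:ℝ)+1) * x : ℝ) : ℂ) * (2 * Real.pi * Complex.I)
                = ((j:ℝ) : ℂ) * (2 * Real.pi * Complex.I) := by
              push_cast
              push_cast at hj
              linear_combination hj
            exact_mod_cast mul_right_cancel₀ two_pi_I_ne_zero h3
          refine ⟨(j : ℚ) / ((k:ℚ)+1), ?_⟩
          have hk : ((k:ℝ)+1) ≠ 0 := by positivity
          push_cast
          rw [div_eq_iff hk, mul_comm]
          exact h2.symm
    have hae : ∀ᵐ p ∂circleMeasure, p ∉ Bad := by
      rw [ae_iff]
      simpa using hBad0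
    filter_upwards [hae] with p hp
    have hsp : p ∈ Metric.sphere (0:ℂ) 1 := by
      by_contra hc
      exact hp (Or.inl hc)
    have hru : ∀ k : ℕ, p ^ (k+1) ≠ 1 := by
      intro k hk
      exact hp (Or.inr (Set.mem_iUnion.mpr ⟨k, hk⟩))
    set t : ℝ := Int.fract (Complex.arg p / (2 * Real.pi)) with htdef
    have ht0 : 0 ≤ t := Int.fract_nonneg _
    have ht1 : t < 1 := Int.fract_lt_one _
    have hpt : p = Complex.exp (2 * Real.pi * Complex.I * (t : ℂ)) := sphere_eq_exp hsp
    have hirr : Irrational t := by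
      rw [Irrational]
      intro hmem
      obtain ⟨q, hq⟩ := hmem
      have hden : ((q.den : ℝ)) * (q : ℝ) = (q.num : ℝ) := by
        rw [Rat.cast_def]
        field_simp
      apply hru (q.den - 1)
      have hd : q.den - 1 + 1 = q.den := Nat.succ_pred_eq_of_pos q.pos
      rw [hd, hpt, ← Complex.exp_nat_mul]
      rw [← Complex.exp_int_mul_two_pi_mul_I q.num]
      congr 1
      rw [← hq]
      rw [show ((q.den:ℂ)) * (2 * (Real.pi:ℂ) * Complex.I * (((q:ℝ)):ℂ))
          = ((((q.den:ℝ) * (q:ℝ) : ℝ)):ℂ) * (2 * Real.pi * Complex.I) by push_cast; ring]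
      rw [hden]
      push_cast
      ring
    have htpos : 0 < t := by
      rcases lt_or_eq_of_le ht0 with h' | h'
      · exact h'
      · exfalso
        rw [← h'] at hirr
        exact (Rat.not_irrational 0) (by simpa using hirr)
    -- the fiber
    set F : ℕ → (ℕ → Fin 2) := fun j => bits ((t + j) / mr) with hFdef
    have hmemIcc : ∀ j : ℕ, j < m' → (t + j) / mr ∈ Set.Icc (0:ℝ) 1 := by
      intro j hj
      have hjr : (j:ℝ) + 1 ≤ mr := by
        rw [← hm'r]
        exact_mod_cast Nat.succ_le_of_lt hj
      constructor
      · positivity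
      · rw [div_le_one hmr0]; linarith
    have hval : ∀ j : ℕ, j < m' → gmap (F j) = (t + j) / mr := fun j hj =>
      g_bits _ (hmemIcc j hj)
    have hirrj : ∀ j : ℕ, Irrational ((t + j) / mr) := by
      intro j
      have h1 : Irrational (t + (j:ℤ)) := Irrational.add_intCast hirr j
      have h2 : Irrational ((t + (j:ℤ)) / (m:ℤ)) := Irrational.div_intCast h1 (by omega)
      have h3 : (t + ((j:ℤ):ℝ)) / ((m:ℤ):ℝ) = (t + (j:ℕ)) / mr := by
        rw [hmrdef]
        push_cast
        ring
      rwa [h3] at h2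
    have hfiber : {ω : ℕ → Fin 2 | codingMap 2 ![n₁, n₂] ω = p} = F '' (Set.Iio m') := by
      ext ω
      simp only [Set.mem_setOf_eq, Set.mem_image, Set.mem_Iio]
      constructor
      · intro hω
        rw [codingMap_eq, hpt] at hω
        obtain ⟨j, hj⟩ := Complex.exp_eq_exp_iff_exists_int.mp hω
        have hreal : mr * gmap ω = t + j := by
          have h3 : ((((n₂ - n₁ : ℤ):ℝ) * gmap ω : ℝ) : ℂ) * (2 * Real.pi * Complex.I)
              = ((t + (j:ℝ) : ℝ) : ℂ) * (2 * Real.pi * Complex.I) := by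
            push_cast
            push_cast at hj
            linear_combination hj
          have h4 : ((n₂ - n₁ : ℤ):ℝ) * gmap ω = t + (j:ℝ) :=
            Complex.ofReal_inj.mp (mul_right_cancel₀ two_pi_I_ne_zero h3)
          rw [hmrdef, hmdef]
          exact h4
        have hg0 := g_nonneg ω
        have hg1 := g_le_one ω
        have hj0 : 0 ≤ j := by
          have hlt : (-1:ℝ) < (j:ℝ) := by nlinarith
          have : (-1:ℤ) < j := by exact_mod_cast hlt
          omega
        have hjm : j < m := by
          have hlt : (j:ℝ) < mr := by nlinarith
          rw [hmrdef] at hlt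
          exact_mod_cast hlt
        refine ⟨j.toNat, ?_, ?_⟩
        · omega
        · have hcast : ((j.toNat : ℕ) : ℝ) = (j : ℝ) := by
            exact_mod_cast congrArg (Int.cast : ℤ → ℝ) (Int.toNat_of_nonneg hj0)
          have hgω : gmap ω = (t + (j.toNat:ℕ)) / mr := by
            rw [hcast, eq_div_iff hmrne]
            linarith
          exact g_inj_irrational (hirrj j.toNat) (hval j.toNat (by omega)) hgω
      · rintro ⟨j, hj, rfl⟩
        rw [codingMap_eq, hval j hj]
        have : mr * ((t + j) / mr) = t + j := by field_simp
        rw [this, hpt]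
        rw [show ((t + (j:ℕ) : ℝ) : ℂ) = (t:ℂ) + (j:ℕ) by push_cast; ring]
        rw [mul_add, Complex.exp_add]
        rw [show 2 * (Real.pi:ℂ) * Complex.I * ((j:ℕ):ℂ) = (((j:ℕ):ℤ):ℂ) * (2 * Real.pi * Complex.I) by push_cast; ring]
        rw [Complex.exp_int_mul_two_pi_mul_I, mul_one]
    rw [hfiber]
    have hinj : Set.InjOn F (Set.Iio m') := by
      intro j hj j' hj' heq
      have h1 : gmap (F j) = gmap (F j') := by rw [heq]
      rw [hval j hj, hval j' hj'] at h1
      field_simp at h1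
      exact_mod_cast add_left_cancel h1
    rw [hinj.encard_image]
    rw [show (Set.Iio m' : Set ℕ) = ↑(Finset.range m') by ext x; simp]
    rw [Set.encard_coe_eq_coe_finsetCard, Finset.card_range]
end

section
/- Let n_1, n_2 be integers and define g_1(x) = x/2 + n_1 and g_2(x) = −x/2 + n_2 on ℝ. Then the unique nonempty compact subset K of ℝ with K = g_1(K) ∪ g_2(K) is the closed interval [min{2n_1, n_2 − n_1}, max{2n_1, n_2 − n_1}]. -/
open EMetric Set
open scoped ENNReal

private lemma aux_infEdist_image {f : ℝ → ℝ} (h : LipschitzWith 2⁻¹ f) (a : ℝ) (t : Set ℝ) :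
    infEdist (f a) (f '' t) ≤ 2⁻¹ * infEdist a t := by
  conv_rhs => rw [infEdist, Metric.infEDist]
  rw [ENNReal.mul_iInf_of_ne (by norm_num) (by norm_num)]
  simp_rw [ENNReal.mul_iInf_of_ne (show (2⁻¹ : ℝ≥0∞) ≠ 0 by norm_num) (by norm_num)]
  refine le_iInf₂ fun y hy => ?_
  calc infEdist (f a) (f '' t) ≤ edist (f a) (f y) :=
        infEdist_le_edist_of_mem (mem_image_of_mem f hy)
    _ ≤ 2⁻¹ * edist a y := by simpa using h a y

private lemma aux_haus_image {f : ℝ → ℝ} (h : LipschitzWith 2⁻¹ f) (s t : Set ℝ) :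
    hausdorffEdist (f '' s) (f '' t) ≤ 2⁻¹ * hausdorffEdist s t := by
  refine hausdorffEdist_le_of_infEdist ?_ ?_
  · rintro x ⟨a, ha, rfl⟩
    exact (aux_infEdist_image h a t).trans
      (mul_le_mul_right (infEdist_le_hausdorffEdist_of_mem ha) _)
  · rintro x ⟨a, ha, rfl⟩
    refine (aux_infEdist_image h a s).trans (mul_le_mul_right ?_ _)
    rw [hausdorffEdist, hausdorffEdist_comm]
    exact infEdist_le_hausdorffEdist_of_mem ha

private lemma aux_haus_union (A B C D : Set ℝ) :
    hausdorffEdist (A ∪ B) (C ∪ D) ≤ max (hausdorffEdist A C) (hausdorffEdist B D) := by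
  refine hausdorffEdist_le_of_infEdist ?_ ?_
  · rintro x (hx | hx)
    · exact le_max_of_le_left <| (infEdist_anti subset_union_left).trans
        (infEdist_le_hausdorffEdist_of_mem hx)
    · exact le_max_of_le_right <| (infEdist_anti subset_union_right).trans
        (infEdist_le_hausdorffEdist_of_mem hx)
  · rintro x (hx | hx)
    · refine le_max_of_le_left <| (infEdist_anti subset_union_left).trans ?_
      rw [hausdorffEdist, hausdorffEdist_comm]; exact infEdist_le_hausdorffEdist_of_mem hx
    · refine le_max_of_le_right <| (infEdist_anti subset_union_right).trans ?_
      rw [hausdorffEdist, hausdorffEdist_comm]; exact infEdist_le_hausdorffEdist_of_mem hx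

private lemma aux_unique {f₁ f₂ : ℝ → ℝ} (h₁ : LipschitzWith 2⁻¹ f₁) (h₂ : LipschitzWith 2⁻¹ f₂)
    {K L : Set ℝ} (hKne : K.Nonempty) (hKc : IsCompact K) (hLne : L.Nonempty) (hLc : IsCompact L)
    (hK : K = f₁ '' K ∪ f₂ '' K) (hL : L = f₁ '' L ∪ f₂ '' L) : K = L := by
  have hfin : hausdorffEdist K L ≠ ⊤ :=
    Metric.hausdorffEdist_ne_top_of_nonempty_of_bounded hKne hLne hKc.isBounded hLc.isBounded
  have hd : hausdorffEdist K L ≤ 2⁻¹ * hausdorffEdist K L := by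
    calc hausdorffEdist K L
        = hausdorffEdist (f₁ '' K ∪ f₂ '' K) (f₁ '' L ∪ f₂ '' L) := by rw [← hK, ← hL]
      _ ≤ max (hausdorffEdist (f₁ '' K) (f₁ '' L)) (hausdorffEdist (f₂ '' K) (f₂ '' L)) :=
          aux_haus_union _ _ _ _
      _ ≤ 2⁻¹ * hausdorffEdist K L :=
          max_le (aux_haus_image h₁ K L) (aux_haus_image h₂ K L)
  have hzero : hausdorffEdist K L = 0 := by
    by_contra h0
    exact absurd hd (not_le.2 (by
      calc 2⁻¹ * hausdorffEdist K L < 1 * hausdorffEdist K L := by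
            exact ENNReal.mul_lt_mul_left h0 hfin (by norm_num)
        _ = hausdorffEdist K L := one_mul _))
  exact hausdorffEdist_zero_iff_eq_of_closed hKc.isClosed hLc.isClosed |>.1 hzero

private lemma aux_image1 (c a b : ℝ) (_hab : a ≤ b) :
    (fun x : ℝ => x / 2 + c) '' Set.Icc a b = Set.Icc (a / 2 + c) (b / 2 + c) := by
  ext y
  constructor
  · rintro ⟨x, ⟨hx1, hx2⟩, rfl⟩
    exact ⟨by linarith, by linarith⟩
  · rintro ⟨hy1, hy2⟩
    exact ⟨2 * (y - c), ⟨by linarith, by linarith⟩, by ring⟩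

private lemma aux_image2 (c a b : ℝ) (_hab : a ≤ b) :
    (fun x : ℝ => -x / 2 + c) '' Set.Icc a b = Set.Icc (-b / 2 + c) (-a / 2 + c) := by
  ext y
  constructor
  · rintro ⟨x, ⟨hx1, hx2⟩, rfl⟩
    exact ⟨by linarith, by linarith⟩
  · rintro ⟨hy1, hy2⟩
    exact ⟨2 * (c - y), ⟨by linarith, by linarith⟩, by ring⟩

private lemma aux_icc_eq (n₁ n₂ : ℝ) :
    Set.Icc (min (2 * n₁) (n₂ - n₁)) (max (2 * n₁) (n₂ - n₁)) =
      (fun x : ℝ => x / 2 + n₁) '' Set.Icc (min (2 * n₁) (n₂ - n₁)) (max (2 * n₁) (n₂ - n₁)) ∪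
      (fun x : ℝ => -x / 2 + n₂) '' Set.Icc (min (2 * n₁) (n₂ - n₁)) (max (2 * n₁) (n₂ - n₁)) := by
  rcases le_total (2 * n₁) (n₂ - n₁) with h | h
  · rw [min_eq_left h, max_eq_right h, aux_image1 n₁ _ _ h, aux_image2 n₂ _ _ h]
    have e1 : 2 * n₁ / 2 + n₁ = 2 * n₁ := by ring
    have e2 : (n₂ - n₁) / 2 + n₁ = (n₁ + n₂) / 2 := by ring
    have e3 : -(n₂ - n₁) / 2 + n₂ = (n₁ + n₂) / 2 := by ring
    have e4 : -(2 * n₁) / 2 + n₂ = n₂ - n₁ := by ring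
    rw [e1, e2, e3, e4, Set.Icc_union_Icc_eq_Icc (by linarith) (by linarith)]
  · rw [min_eq_right h, max_eq_left h, aux_image1 n₁ _ _ h, aux_image2 n₂ _ _ h]
    have e1 : (n₂ - n₁) / 2 + n₁ = (n₁ + n₂) / 2 := by ring
    have e2 : 2 * n₁ / 2 + n₁ = 2 * n₁ := by ring
    have e3 : -(2 * n₁) / 2 + n₂ = n₂ - n₁ := by ring
    have e4 : -(n₂ - n₁) / 2 + n₂ = (n₁ + n₂) / 2 := by ring
    rw [e1, e2, e3, e4, Set.union_comm, Set.Icc_union_Icc_eq_Icc (by linarith) (by linarith)]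

private lemma aux_lip1 (c : ℝ) : LipschitzWith 2⁻¹ (fun x : ℝ => x / 2 + c) := by
  refine LipschitzWith.of_dist_le_mul fun x y => ?_
  simp only [Real.dist_eq]
  rw [show x / 2 + c - (y / 2 + c) = (x - y) / 2 by ring, abs_div]
  rw [abs_of_pos (by norm_num : (0:ℝ) < 2)]
  push_cast
  ring_nf
  linarith [abs_nonneg (x - y)]

private lemma aux_lip2 (c : ℝ) : LipschitzWith 2⁻¹ (fun x : ℝ => -x / 2 + c) := by
  refine LipschitzWith.of_dist_le_mul fun x y => ?_
  simp only [Real.dist_eq]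
  rw [show -x / 2 + c - (-y / 2 + c) = -((x - y) / 2) by ring, abs_neg, abs_div]
  rw [abs_of_pos (by norm_num : (0:ℝ) < 2)]
  push_cast
  ring_nf
  linarith [abs_nonneg (x - y)]

/-- For `g₁(x) = x/2 + n₁`, `g₂(x) = -x/2 + n₂` with integers `n₁, n₂`, the
attractor is the closed interval `[min(2n₁, n₂ - n₁), max(2n₁, n₂ - n₁)]`. -/
theorem attractor_eq_Icc_mixed (n₁ n₂ : ℤ) (K : Set ℝ) :
    (K.Nonempty ∧ IsCompact K ∧
      K = (fun x : ℝ => x / 2 + (n₁ : ℝ)) '' K ∪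
          (fun x : ℝ => -x / 2 + (n₂ : ℝ)) '' K) ↔
    K = Set.Icc (min (2 * (n₁ : ℝ)) ((n₂ : ℝ) - (n₁ : ℝ)))
          (max (2 * (n₁ : ℝ)) ((n₂ : ℝ) - (n₁ : ℝ))) := by
  constructor
  · rintro ⟨hne, hc, heq⟩
    exact aux_unique (aux_lip1 (n₁ : ℝ)) (aux_lip2 (n₂ : ℝ)) hne hc
      (Set.nonempty_Icc.2 min_le_max) isCompact_Icc heq (aux_icc_eq (n₁ : ℝ) (n₂ : ℝ))
  · rintro rfl
    exact ⟨Set.nonempty_Icc.2 min_le_max, isCompact_Icc, aux_icc_eq (n₁ : ℝ) (n₂ : ℝ)⟩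
end

section
/- Let g_1(z) = ((−1−i)/2)·z + 1 + i and g_2(z) = ((−1+i)/2)·z + 2 on ℂ. Then the unique nonempty compact subset K of ℂ with K = g_1(K) ∪ g_2(K) is the closed triangle (the convex hull) with vertices 0, 2 and 1 + i. -/
open EMetric Set

namespace AttractorAux

/-- The triangle as intersection of half-planes. -/
def H : Set ℂ := {z | 0 ≤ z.im ∧ z.im ≤ z.re ∧ z.re + z.im ≤ 2}

lemma convex_H : Convex ℝ H := by
  rintro z ⟨hz1, hz2, hz3⟩ w ⟨hw1, hw2, hw3⟩ a b ha hb hab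
  refine ⟨?_, ?_, ?_⟩ <;>
    simp only [Complex.add_im, Complex.add_re, Complex.smul_im, Complex.smul_re, smul_eq_mul] <;>
    nlinarith [mul_nonneg ha hz1, mul_nonneg hb hw1,
      mul_le_mul_of_nonneg_left hz2 ha, mul_le_mul_of_nonneg_left hw2 hb,
      mul_le_mul_of_nonneg_left hz3 ha, mul_le_mul_of_nonneg_left hw3 hb]

lemma combo_mem_convexHull {x y z p : ℂ} {a b c : ℝ} (ha : 0 ≤ a) (hb : 0 ≤ b) (hc : 0 ≤ c)
    (hs : a + b + c = 1) (hp : a • x + b • y + c • z = p) :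
    p ∈ convexHull ℝ ({x, y, z} : Set ℂ) := by
  have hx : x ∈ convexHull ℝ ({x, y, z} : Set ℂ) := subset_convexHull _ _ (by simp)
  have hy : y ∈ convexHull ℝ ({x, y, z} : Set ℂ) := subset_convexHull _ _ (by simp)
  have hz : z ∈ convexHull ℝ ({x, y, z} : Set ℂ) := subset_convexHull _ _ (by simp)
  have hconv := convex_convexHull ℝ ({x, y, z} : Set ℂ)
  rcases eq_or_lt_of_le (by linarith : (0:ℝ) ≤ b + c) with h | h
  · have hb0 : b = 0 := by linarith
    have hc0 : c = 0 := by linarith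
    have ha1 : a = 1 := by linarith
    rw [hb0, hc0, ha1] at hp
    simpa [← hp] using hx
  · have ht : b + c ≠ 0 := ne_of_gt h
    have hq : (b/(b+c)) • y + (c/(b+c)) • z ∈ convexHull ℝ ({x, y, z} : Set ℂ) :=
      hconv hy hz (by positivity) (by positivity) (by field_simp)
    have hmem := hconv hx hq ha h.le (by linarith)
    have : a • x + (b+c) • ((b/(b+c)) • y + (c/(b+c)) • z) = p := by
      rw [smul_add, smul_smul, smul_smul, mul_div_cancel₀ _ ht, mul_div_cancel₀ _ ht, ← hp]
      ring_nf
    rwa [this] at hmem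

lemma hull_eq_H : convexHull ℝ ({0, 2, 1 + Complex.I} : Set ℂ) = H := by
  apply le_antisymm
  · apply convexHull_min _ convex_H
    rintro z hz
    simp only [mem_insert_iff, mem_singleton_iff] at hz
    rcases hz with rfl | rfl | rfl <;> norm_num [H]
  · rintro z ⟨h1, h2, h3⟩
    refine combo_mem_convexHull (a := (2 - z.re - z.im)/2) (b := (z.re - z.im)/2) (c := z.im)
      (by linarith) (by linarith) h1 (by ring) ?_
    apply Complex.ext <;> simp [Complex.smul_re, Complex.smul_im] <;> ring

lemma g1_image : (fun z : ℂ => ((-1 - Complex.I) / 2) * z + 1 + Complex.I) '' H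
    = {z ∈ H | z.re ≤ 1} := by
  ext z
  constructor
  · rintro ⟨x, ⟨h1, h2, h3⟩, rfl⟩
    constructor
    · refine ⟨?_, ?_, ?_⟩ <;>
        simp only [Complex.add_re, Complex.add_im, Complex.mul_re, Complex.mul_im] <;>
        simp <;> linarith
    · simp only [Complex.add_re, Complex.mul_re] <;> simp <;> linarith
  · rintro ⟨⟨h1, h2, h3⟩, h4⟩
    refine ⟨Complex.mk (2 - z.re - z.im) (z.re - z.im), ⟨?_, ?_, ?_⟩, ?_⟩
    · simp; linarith
    · simp; linarith
    · simp; linarith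
    · apply Complex.ext <;>
        simp only [Complex.add_re, Complex.add_im, Complex.mul_re, Complex.mul_im] <;>
        simp <;> ring

lemma g2_image : (fun z : ℂ => ((-1 + Complex.I) / 2) * z + 2) '' H
    = {z ∈ H | 1 ≤ z.re} := by
  ext z
  constructor
  · rintro ⟨x, ⟨h1, h2, h3⟩, rfl⟩
    constructor
    · refine ⟨?_, ?_, ?_⟩ <;>
        simp only [Complex.add_re, Complex.add_im, Complex.mul_re, Complex.mul_im] <;>
        simp <;> linarith
    · simp only [Complex.add_re, Complex.mul_re] <;> simp <;> linarith
  · rintro ⟨⟨h1, h2, h3⟩, h4⟩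
    refine ⟨Complex.mk (2 - z.re + z.im) (2 - z.re - z.im), ⟨?_, ?_, ?_⟩, ?_⟩
    · simp; linarith
    · simp; linarith
    · simp; linarith
    · apply Complex.ext <;>
        simp only [Complex.add_re, Complex.add_im, Complex.mul_re, Complex.mul_im] <;>
        simp <;> ring

lemma H_fixed : H = (fun z : ℂ => ((-1 - Complex.I) / 2) * z + 1 + Complex.I) '' H ∪
    (fun z : ℂ => ((-1 + Complex.I) / 2) * z + 2) '' H := by
  rw [g1_image, g2_image]
  ext z
  constructor
  · intro hz
    rcases le_total z.re 1 with h | h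
    · exact Or.inl ⟨hz, h⟩
    · exact Or.inr ⟨hz, h⟩
  · rintro (⟨hz, _⟩ | ⟨hz, _⟩) <;> exact hz

open scoped NNReal ENNReal



lemma lipschitz_affine (a c' : ℂ) : LipschitzWith ‖a‖₊ (fun z : ℂ => a * z + c') :=
  LipschitzWith.of_dist_le_mul fun z w => by
    have h : (a * z + c') - (a * w + c') = a * (z - w) := by ring
    rw [dist_eq_norm, dist_eq_norm, h, norm_mul, coe_nnnorm]

lemma infEdist_image_le {f : ℂ → ℂ} {c : ℝ≥0} (hc : c ≠ 0) (hf : LipschitzWith c f)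
    (x : ℂ) (t : Set ℂ) : infEdist (f x) (f '' t) ≤ c * infEdist x t := by
  have hcc : (c : ℝ≥0∞) ≠ 0 := by exact_mod_cast hc
  have hrep : (c : ℝ≥0∞) * infEdist x t = ⨅ y ∈ t, (c : ℝ≥0∞) * edist x y := by
    show (c : ℝ≥0∞) * ⨅ y ∈ t, edist x y = _
    rw [ENNReal.mul_iInf_of_ne hcc ENNReal.coe_ne_top]
    exact iInf_congr fun y => ENNReal.mul_iInf_of_ne hcc ENNReal.coe_ne_top
  rw [hrep]
  exact le_iInf₂ fun y hy =>
    (infEdist_le_edist_of_mem (mem_image_of_mem f hy)).trans (hf x y)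

lemma hausdorffEdist_image_le {f : ℂ → ℂ} {c : ℝ≥0} (hc : c ≠ 0) (hf : LipschitzWith c f)
    (s t : Set ℂ) : hausdorffEdist (f '' s) (f '' t) ≤ c * hausdorffEdist s t := by
  apply hausdorffEdist_le_of_infEdist
  · rintro _ ⟨x, hx, rfl⟩
    exact (infEdist_image_le hc hf x t).trans
      (mul_le_mul_right (infEdist_le_hausdorffEdist_of_mem hx) _)
  · rintro _ ⟨x, hx, rfl⟩
    refine (infEdist_image_le hc hf x s).trans (mul_le_mul_right ?_ _)
    rw [show hausdorffEdist s t = hausdorffEdist t s from hausdorffEdist_comm] at *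
    exact infEdist_le_hausdorffEdist_of_mem hx

lemma hausdorffEdist_union_le (s t s' t' : Set ℂ) :
    hausdorffEdist (s ∪ t) (s' ∪ t') ≤ max (hausdorffEdist s s') (hausdorffEdist t t') := by
  apply hausdorffEdist_le_of_infEdist
  · rintro x (hx | hx)
    · exact ((infEdist_anti subset_union_left).trans
        (infEdist_le_hausdorffEdist_of_mem hx)).trans (le_max_left _ _)
    · exact ((infEdist_anti subset_union_right).trans
        (infEdist_le_hausdorffEdist_of_mem hx)).trans (le_max_right _ _)
  · rintro x (hx | hx)
    · refine ((infEdist_anti subset_union_left).trans ?_).trans (le_max_left _ _)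
      rw [show hausdorffEdist s s' = hausdorffEdist s' s from hausdorffEdist_comm]
      exact infEdist_le_hausdorffEdist_of_mem hx
    · refine ((infEdist_anti subset_union_right).trans ?_).trans (le_max_right _ _)
      rw [show hausdorffEdist t t' = hausdorffEdist t' t from hausdorffEdist_comm]
      exact infEdist_le_hausdorffEdist_of_mem hx

lemma norm1_lt : ‖((-1 - Complex.I) / 2 : ℂ)‖ < 1 := by
  have h : ‖((-1 - Complex.I) / 2 : ℂ)‖ ^ 2 = 1 / 2 := by
    rw [Complex.sq_norm]
    simp [Complex.normSq_apply]
    norm_num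
  nlinarith [norm_nonneg ((-1 - Complex.I) / 2 : ℂ)]

lemma norm2_lt : ‖((-1 + Complex.I) / 2 : ℂ)‖ < 1 := by
  have h : ‖((-1 + Complex.I) / 2 : ℂ)‖ ^ 2 = 1 / 2 := by
    rw [Complex.sq_norm]
    simp [Complex.normSq_apply]
    norm_num
  nlinarith [norm_nonneg ((-1 + Complex.I) / 2 : ℂ)]

lemma a1_ne : ((-1 - Complex.I) / 2 : ℂ) ≠ 0 := by
  simp [div_eq_zero_iff, Complex.ext_iff]

lemma a2_ne : ((-1 + Complex.I) / 2 : ℂ) ≠ 0 := by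
  simp [div_eq_zero_iff, Complex.ext_iff]


end AttractorAux

open AttractorAux EMetric Set
open scoped NNReal ENNReal

/-- For `g₁(z) = ((-1-i)/2)z + 1 + i` and `g₂(z) = ((-1+i)/2)z + 2` on `ℂ`,
the attractor is the closed triangle (convex hull) with vertices `0`, `2`
and `1 + i`. -/
theorem attractor_eq_triangle (K : Set ℂ) :
    (K.Nonempty ∧ IsCompact K ∧
      K = (fun z : ℂ => ((-1 - Complex.I) / 2) * z + 1 + Complex.I) '' K ∪
          (fun z : ℂ => ((-1 + Complex.I) / 2) * z + 2) '' K) ↔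
    K = convexHull ℝ ({0, 2, 1 + Complex.I} : Set ℂ) := by
  set g1 : ℂ → ℂ := fun z : ℂ => ((-1 - Complex.I) / 2) * z + 1 + Complex.I with hg1
  set g2 : ℂ → ℂ := fun z : ℂ => ((-1 + Complex.I) / 2) * z + 2 with hg2
  set T := convexHull ℝ ({0, 2, 1 + Complex.I} : Set ℂ) with hT
  have hTH : T = H := hull_eq_H
  have hTne : T.Nonempty := ⟨0, subset_convexHull _ _ (by simp)⟩
  have hTc : IsCompact T := (Set.toFinite _).isCompact_convexHull ℝ
  have hTfix : T = g1 '' T ∪ g2 '' T := by rw [hTH]; exact H_fixed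
  constructor
  · rintro ⟨hne, hKc, hKeq⟩
    -- Lipschitz constants
    set a1 : ℂ := (-1 - Complex.I) / 2 with ha1
    set a2 : ℂ := (-1 + Complex.I) / 2 with ha2
    have hl1 : LipschitzWith ‖a1‖₊ g1 := by
      have := lipschitz_affine a1 (1 + Complex.I)
      convert this using 2 with z
      ring
    have hl2 : LipschitzWith ‖a2‖₊ g2 := lipschitz_affine a2 2
    have hc1 : ‖a1‖₊ ≠ 0 := nnnorm_ne_zero_iff.2 a1_ne
    have hc2 : ‖a2‖₊ ≠ 0 := nnnorm_ne_zero_iff.2 a2_ne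
    have hc1lt : (‖a1‖₊ : ℝ≥0∞) < 1 := by
      rw [← ENNReal.coe_one, ENNReal.coe_lt_coe, ← NNReal.coe_lt_coe, coe_nnnorm,
        NNReal.coe_one]
      exact norm1_lt
    have hc2lt : (‖a2‖₊ : ℝ≥0∞) < 1 := by
      rw [← ENNReal.coe_one, ENNReal.coe_lt_coe, ← NNReal.coe_lt_coe, coe_nnnorm,
        NNReal.coe_one]
      exact norm2_lt
    set d := hausdorffEdist K T with hd
    have hdne : d ≠ ⊤ :=
      Metric.hausdorffEdist_ne_top_of_nonempty_of_bounded hne hTne hKc.isBounded hTc.isBounded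
    have hkey : d ≤ max ((‖a1‖₊ : ℝ≥0∞) * d) ((‖a2‖₊ : ℝ≥0∞) * d) := by
      have e : d = hausdorffEdist (g1 '' K ∪ g2 '' K) (g1 '' T ∪ g2 '' T) := by
        rw [hd]; conv_lhs => rw [hKeq, hTfix]
      calc d = hausdorffEdist (g1 '' K ∪ g2 '' K) (g1 '' T ∪ g2 '' T) := e
        _ ≤ max (hausdorffEdist (g1 '' K) (g1 '' T)) (hausdorffEdist (g2 '' K) (g2 '' T)) :=
            hausdorffEdist_union_le _ _ _ _
        _ ≤ max ((‖a1‖₊ : ℝ≥0∞) * d) ((‖a2‖₊ : ℝ≥0∞) * d) :=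
            max_le_max (hausdorffEdist_image_le hc1 hl1 K T)
              (hausdorffEdist_image_le hc2 hl2 K T)
    have hd0 : d = 0 := by
      by_contra h
      have l1 : (‖a1‖₊ : ℝ≥0∞) * d < d := by
        calc (‖a1‖₊ : ℝ≥0∞) * d < 1 * d := ENNReal.mul_lt_mul_left h hdne hc1lt
          _ = d := one_mul d
      have l2 : (‖a2‖₊ : ℝ≥0∞) * d < d := by
        calc (‖a2‖₊ : ℝ≥0∞) * d < 1 * d := ENNReal.mul_lt_mul_left h hdne hc2lt
          _ = d := one_mul d
      exact absurd hkey (not_le.2 (max_lt l1 l2))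
    exact hausdorffEdist_zero_iff_eq_of_closed hKc.isClosed hTc.isClosed |>.1 hd0
  · rintro rfl
    exact ⟨hTne, hTc, hTfix⟩
end
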